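/- arXiv:2504.18450 — 3 statements merged into one kernel-verified Lean document; each statement's English description precedes it below -/
import Mathlib

section
/- Let H ∈ (0,1) be such that p = 1/H is a positive integer, and let X be a perturbed fractional Brownian motion X_t = C₀ B^H_t + Y_t. Set A_{0,p} = C₀^p E[Z^p] where Z is a standard normal random variable. Then there is a constant C > 0 such that for every N ≥ 1 and every i with 1 ≤ i ≤ N−1, E[( (X_{t_{i+1}} − X_{t_i})^p − A_{0,p}/N )²] ≤ C / N². -/
open MeasureTheory ProbabilityTheory Filter

noncomputable section

/-- A (centered or not) Gaussian process: every finite linear combination of its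
values has a (possibly degenerate) Gaussian law. -/
def IsGaussianProcess {Ω : Type*} [MeasurableSpace Ω] (P : Measure Ω)
    (X : ℝ → Ω → ℝ) : Prop :=
  (∀ t : ℝ, Measurable (X t)) ∧
  ∀ (n : ℕ) (t : Fin n → ℝ) (c : Fin n → ℝ), ∃ m : ℝ, ∃ v : NNReal,
    P.map (fun ω => ∑ i, c i * X (t i) ω) = gaussianReal m v

/-- A fractional Brownian motion with Hurst parameter `H`: a centered Gaussian
process with covariance `E[B_s B_t] = (1/2)(s^{2H} + t^{2H} - |t-s|^{2H})`. -/
structure IsFBM {Ω : Type*} [MeasurableSpace Ω] (P : Measure Ω) (H : ℝ)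
    (B : ℝ → Ω → ℝ) : Prop where
  gaussian : IsGaussianProcess P B
  centered : ∀ t : ℝ, 0 ≤ t → ∫ ω, B t ω ∂P = 0
  cov : ∀ s t : ℝ, 0 ≤ s → 0 ≤ t →
    ∫ ω, B s ω * B t ω ∂P = (1/2) * (s ^ (2*H) + t ^ (2*H) - |t - s| ^ (2*H))


/-- A perturbed fractional Brownian motion `X_t = C₀ B^H_t + Y_t`, where `B^H`
is a fBm with Hurst index `H`, and `Y` is a centered Gaussian process,
self-similar of index `H`, whose increments satisfy
`E|Y_t - Y_s|² ≤ C s^{2H-2}` for `0 < s < t`. -/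
structure IsPerturbedFBM {Ω : Type*} [MeasurableSpace Ω] (P : Measure Ω)
    (H C₀ : ℝ) (B Y X : ℝ → Ω → ℝ) : Prop where
  C₀_pos : 0 < C₀
  fbm : IsFBM P H B
  Ygaussian : IsGaussianProcess P Y
  Ycentered : ∀ t : ℝ, 0 ≤ t → ∫ ω, Y t ω ∂P = 0
  Yselfsim : ∀ c : ℝ, 0 < c → ∀ (n : ℕ) (t : Fin n → ℝ),
    P.map (fun ω => fun i => Y (c * t i) ω)
      = P.map (fun ω => fun i => c ^ H * Y (t i) ω)
  Yincr : ∃ C > 0, ∀ s t : ℝ, 0 < s → s < t →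
    ∫ ω, (Y t ω - Y s ω)^2 ∂P ≤ C * s ^ (2*H - 2)
  Xdef : ∀ (t : ℝ) (ω : Ω), X t ω = C₀ * B t ω + Y t ω

/-- The `q`-th moment of a standard normal random variable. -/
def gaussMoment (q : ℕ) : ℝ := ∫ x : ℝ, x ^ q ∂(gaussianReal 0 1)

set_option maxHeartbeats 1000000

namespace GaussAux

open Real Set
open scoped NNReal ENNReal

/-- density rewrite -/
lemma pdf_eq (x : ℝ) : gaussianPDFReal 0 1 x = (√(2*π))⁻¹ * rexp (-(1/2) * x^2) := by
  simp only [gaussianPDFReal, NNReal.coe_one, mul_one, sub_zero]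
  congr 1
  ring

lemma integral_gaussianReal_std (g : ℝ → ℝ) (hg : Measurable g) :
    ∫ x, g x ∂(gaussianReal 0 1) = ∫ x, gaussianPDFReal 0 1 x * g x := by
  rw [gaussianReal_of_var_ne_zero 0 one_ne_zero]
  have h : (gaussianPDF 0 1) = fun x => ((Real.toNNReal (gaussianPDFReal 0 1 x) : ℝ≥0) : ℝ≥0∞) := by
    funext x; rfl
  rw [h, integral_withDensity_eq_integral_smul
    ((measurable_gaussianPDFReal 0 1).real_toNNReal) g]
  congr 1
  funext x
  rw [NNReal.smul_def, smul_eq_mul, Real.coe_toNNReal _ (gaussianPDFReal_nonneg 0 1 x)]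

lemma integrable_gaussianReal_iff (g : ℝ → ℝ) :
    Integrable g (gaussianReal 0 1) ↔
      Integrable (fun x => gaussianPDFReal 0 1 x * g x) := by
  rw [gaussianReal_of_var_ne_zero 0 one_ne_zero]
  have h : (gaussianPDF 0 1) = fun x => ((Real.toNNReal (gaussianPDFReal 0 1 x) : ℝ≥0) : ℝ≥0∞) := by
    funext x; rfl
  rw [h, integrable_withDensity_iff_integrable_smul
    ((measurable_gaussianPDFReal 0 1).real_toNNReal)]
  constructor <;> intro h' <;> refine h'.congr (Filter.Eventually.of_forall fun x => ?_) <;>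
    simp only [NNReal.smul_def, smul_eq_mul, Real.coe_toNNReal _ (gaussianPDFReal_nonneg 0 1 x)]

/-- integrability of |x|^k * exp(-x²/2) via exp bound -/
lemma integrable_abs_pow_mul_exp (k : ℕ) :
    Integrable (fun x : ℝ => |x| ^ k * rexp (-(1/2) * x^2)) := by
  have key : ∀ x : ℝ, |x| ^ k * rexp (-(1/2) * x^2)
      ≤ ((k.factorial : ℝ) * 4 ^ k + 1) * rexp (-(1/4) * x^2) := by
    intro x
    have h1 : |x| ^ k ≤ x ^ (2*k) + 1 := by
      rcases le_or_gt (|x|) 1 with h | h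
      · have : |x| ^ k ≤ 1 := pow_le_one₀ (abs_nonneg x) h
        nlinarith [pow_nonneg (sq_nonneg x) k, pow_mul x 2 k]
      · have h2 : |x| ^ k ≤ |x| ^ (2*k) :=
          pow_le_pow_right₀ h.le (by omega)
        have h3 : |x| ^ (2*k) = x ^ (2*k) := by
          rw [← abs_pow, abs_of_nonneg (by rw [pow_mul]; positivity : (0:ℝ) ≤ x ^ (2*k))]
        nlinarith
    have h2 : x ^ (2*k) ≤ (k.factorial : ℝ) * 4 ^ k * rexp ((1/4) * x^2) := by
      have hterm : ((1/4) * x^2) ^ k / (k.factorial : ℝ) ≤ rexp ((1/4) * x^2) := by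
        calc ((1/4) * x^2) ^ k / (k.factorial : ℝ)
            ≤ ∑ i ∈ Finset.range (k+1), ((1/4) * x^2) ^ i / (i.factorial : ℝ) := by
              exact Finset.single_le_sum (f := fun i => ((1/4)*x^2)^i / (i.factorial:ℝ))
                (fun i _ => by positivity) (Finset.self_mem_range_succ k)
          _ ≤ rexp ((1/4) * x^2) := Real.sum_le_exp_of_nonneg (by positivity) (k+1)
      have hfac : (0:ℝ) < (k.factorial : ℝ) := by positivity
      rw [div_le_iff₀ hfac] at hterm
      have : ((1/4) * x^2) ^ k = x ^ (2*k) / 4 ^ k := by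
        rw [mul_pow, pow_mul]
        ring_nf
        simp only [one_div]
      rw [this] at hterm
      have h4 : (0:ℝ) < 4 ^ k := by positivity
      calc x ^ (2*k) = (x ^ (2*k) / 4^k) * 4^k := by field_simp
        _ ≤ (rexp ((1/4)*x^2) * (k.factorial:ℝ)) * 4^k := by
            apply mul_le_mul_of_nonneg_right hterm h4.le
        _ = (k.factorial : ℝ) * 4 ^ k * rexp ((1/4)*x^2) := by ring
    have hx : rexp (-(1/2) * x^2) ≤ rexp (-(1/4) * x^2) :=
      Real.exp_le_exp.mpr (by nlinarith [sq_nonneg x])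
    have he : (0:ℝ) < rexp (-(1/2) * x^2) := Real.exp_pos _
    calc |x| ^ k * rexp (-(1/2) * x^2)
        ≤ (x ^ (2*k) + 1) * rexp (-(1/2) * x^2) :=
          mul_le_mul_of_nonneg_right h1 he.le
      _ ≤ ((k.factorial : ℝ) * 4 ^ k * rexp ((1/4) * x^2) + 1) * rexp (-(1/2) * x^2) := by
          apply mul_le_mul_of_nonneg_right (by linarith) he.le
      _ ≤ ((k.factorial : ℝ) * 4 ^ k + 1) * rexp (-(1/4) * x^2) := by
          rw [add_mul, one_mul, mul_assoc, ← Real.exp_add]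
          have harg : 1/4 * x^2 + -(1/2) * x^2 = -(1/4) * x^2 := by ring
          rw [harg, add_mul, one_mul]
          have h6 : (0:ℝ) ≤ (k.factorial:ℝ) * 4^k := by positivity
          nlinarith [Real.exp_pos (-(1/4)*x^2)]
  refine Integrable.mono' ((integrable_exp_neg_mul_sq (by norm_num : (0:ℝ) < 1/4)).const_mul
    ((k.factorial : ℝ) * 4 ^ k + 1)) ?_ (Filter.Eventually.of_forall fun x => ?_)
  · exact ((measurable_abs.pow_const k).mul
      ((measurable_id.pow_const 2).const_mul (-(1/2))).exp).aestronglyMeasurable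
  · rw [Real.norm_eq_abs, abs_of_nonneg (by positivity)]
    exact key x

lemma integrable_pow_std (k : ℕ) :
    Integrable (fun x : ℝ => x ^ k) (gaussianReal 0 1) := by
  rw [integrable_gaussianReal_iff _]
  have : (fun x : ℝ => gaussianPDFReal 0 1 x * x ^ k) =
      fun x => (√(2*π))⁻¹ * (rexp (-(1/2) * x^2) * x ^ k) := by
    funext x; rw [pdf_eq]; ring
  rw [this]
  apply Integrable.const_mul
  refine (integrable_abs_pow_mul_exp k).mono'
    ((((measurable_id.pow_const 2).const_mul (-(1/2))).exp.mul
      (measurable_id.pow_const k)).aestronglyMeasurable)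
    (Filter.Eventually.of_forall fun x => ?_)
  rw [Real.norm_eq_abs, abs_mul, abs_of_nonneg (Real.exp_pos _).le, ← abs_pow x k]
  rw [mul_comm]


lemma integral_odd_eq_zero (f : ℝ → ℝ) (hf : Integrable f) (hsymm : ∀ x, f (-x) = - f x) :
    ∫ x, f x = 0 := by
  have h1 : (∫ x in Iic (0:ℝ), f x) + ∫ x in Ioi (0:ℝ), f x = ∫ x, f x := by
    rw [← compl_Iic]
    exact integral_add_compl measurableSet_Iic hf
  have h2 : ∫ x in Iic (0:ℝ), f x = - ∫ x in Ioi (0:ℝ), f x := by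
    have h := integral_comp_neg_Ioi (0:ℝ) f
    rw [neg_zero] at h
    rw [← h, ← integral_neg]
    exact setIntegral_congr_fun measurableSet_Ioi (fun x _ => by rw [hsymm]) |>.symm
  linarith

lemma integral_even_eq (f : ℝ → ℝ) (hsymm : ∀ x, f (-x) = f x) :
    ∫ x, f x = 2 * ∫ x in Ioi (0:ℝ), f x := by
  have h : ∀ x : ℝ, f |x| = f x := by
    intro x
    rcases le_or_gt 0 x with h | h
    · rw [abs_of_nonneg h]
    · rw [abs_of_neg h, hsymm]
  have h2 := integral_comp_abs (f := f)
  simp_rw [h] at h2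
  exact h2

lemma integral_x_mul_exp : ∫ x : ℝ, x * rexp (-(1/2) * x^2) = 0 := by
  apply integral_odd_eq_zero
  · exact integrable_mul_exp_neg_mul_sq (by norm_num : (0:ℝ) < 1/2)
  · intro x; rw [neg_sq]; ring

lemma integral_sq_mul_exp : ∫ x : ℝ, x^2 * rexp (-(1/2) * x^2) = √(2*π) := by
  have heven : ∀ x : ℝ, (fun y : ℝ => y^2 * rexp (-(1/2) * y^2)) (-x)
      = (fun y : ℝ => y^2 * rexp (-(1/2) * y^2)) x := by
    intro x; simp only [neg_sq]
  rw [integral_even_eq _ heven]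
  have hIoi : ∫ x in Ioi (0:ℝ), x^2 * rexp (-(1/2) * x^2)
      = ∫ x in Ioi (0:ℝ), x ^ (2:ℝ) * rexp (-(1/2) * x ^ (2:ℝ)) := by
    refine setIntegral_congr_fun measurableSet_Ioi (fun x hx => ?_) |>.symm
    have : x ^ (2:ℝ) = x ^ (2:ℕ) := by
      rw [← Real.rpow_natCast x 2]; norm_num
    rw [this]
  rw [hIoi, integral_rpow_mul_exp_neg_mul_rpow (by norm_num) (by norm_num) (by norm_num : (0:ℝ) < 1/2)]
  have h32 : ((2:ℝ) + 1) / 2 = 1/2 + 1 := by norm_num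
  rw [h32, Real.Gamma_add_one (by norm_num), Real.Gamma_one_half_eq]
  have hb : ((1:ℝ)/2) ^ (-(2 + 1) / 2 : ℝ) = 2 ^ ((3:ℝ)/2) := by
    rw [one_div, Real.inv_rpow (by norm_num), ← Real.rpow_neg (by norm_num)]
    norm_num
  rw [hb]
  have h2 : (2:ℝ) ^ ((3:ℝ)/2) = 2 * √2 := by
    rw [show (3:ℝ)/2 = 1 + 1/2 by norm_num, Real.rpow_add (by norm_num), Real.rpow_one,
      Real.sqrt_eq_rpow]
  have h3 : √(2*π) = √2 * √π := Real.sqrt_mul (by norm_num) π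
  rw [h2, h3]
  ring


lemma sqrt_two_pi_pos : (0:ℝ) < √(2*π) := Real.sqrt_pos.mpr (by positivity)

lemma integral_id_std : ∫ x, x ∂(gaussianReal 0 1) = 0 := by
  rw [integral_gaussianReal_std (fun x => x) (by fun_prop)]
  have : (fun x : ℝ => gaussianPDFReal 0 1 x * x)
      = fun x => (√(2*π))⁻¹ * (x * rexp (-(1/2) * x^2)) := by
    funext x; rw [pdf_eq]; ring
  rw [this, integral_const_mul, integral_x_mul_exp, mul_zero]

lemma integral_sq_std : ∫ x, x^2 ∂(gaussianReal 0 1) = 1 := by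
  rw [integral_gaussianReal_std (fun x => x^2) (by fun_prop)]
  have : (fun x : ℝ => gaussianPDFReal 0 1 x * x^2)
      = fun x => (√(2*π))⁻¹ * (x^2 * rexp (-(1/2) * x^2)) := by
    funext x; rw [pdf_eq]; ring
  rw [this, integral_const_mul, integral_sq_mul_exp,
    inv_mul_cancel₀ (ne_of_gt sqrt_two_pi_pos)]

lemma gauss_affine (m : ℝ) (v : ℝ≥0) (hv : v ≠ 0) :
    (gaussianReal 0 1).map (fun x => √(v:ℝ) * x + m) = gaussianReal m v := by
  have hcomp : (fun x : ℝ => √(v:ℝ) * x + m) = (· + m) ∘ (fun x : ℝ => √(v:ℝ) * x) := rfl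
  rw [hcomp, ← Measure.map_map (measurable_add_const m) (measurable_const_mul _)]
  have h1 : (gaussianReal 0 1).map (fun x => √(v:ℝ) * x) = gaussianReal 0 v := by
    have := gaussianReal_map_const_mul (μ := 0) (v := 1) (√(v:ℝ))
    simp only [mul_zero] at this
    convert this using 2
    ext
    simp [Real.sq_sqrt (v:ℝ≥0).coe_nonneg]
  rw [h1, gaussianReal_map_add_const m, zero_add]

lemma integrable_dirac_of_meas {g : ℝ → ℝ} (hg : Measurable g) (a : ℝ) :
    Integrable g (Measure.dirac a) := by
  have h : g =ᵐ[Measure.dirac a] fun _ => g a := by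
    rw [Filter.EventuallyEq, MeasureTheory.ae_dirac_eq]
    exact Filter.eventually_pure.mpr rfl
  exact (integrable_const (g a)).congr h.symm

/-- second moment of gaussianReal m v -/
lemma integral_sq_gauss (m : ℝ) (v : ℝ≥0) :
    ∫ x, x^2 ∂(gaussianReal m v) = (v:ℝ) + m^2 := by
  by_cases hv : v = 0
  · subst hv
    rw [gaussianReal_zero_var, integral_dirac]
    simp
  rw [← gauss_affine m v hv,
    integral_map (f := fun x : ℝ => x^2) (by fun_prop)
      (by fun_prop : Measurable (fun x : ℝ => x^2)).aestronglyMeasurable]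
  have hexp : (fun x : ℝ => (√(v:ℝ) * x + m)^2)
      = fun x => (v:ℝ) * x^2 + ((2 * √(v:ℝ) * m) * x + m^2 * 1) := by
    funext x
    have : √(v:ℝ) ^ 2 = (v:ℝ) := Real.sq_sqrt (v:ℝ≥0).coe_nonneg
    ring_nf
    nlinarith [this]
  rw [hexp]
  have iid : Integrable (fun x : ℝ => x) (gaussianReal 0 1) := by
    have := integrable_pow_std 1
    simpa using this
  have i1 : Integrable (fun x : ℝ => (v:ℝ) * x^2) (gaussianReal 0 1) :=
    (integrable_pow_std 2).const_mul _
  have i2 : Integrable (fun x : ℝ => (2 * √(v:ℝ) * m) * x) (gaussianReal 0 1) :=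
    iid.const_mul _
  have i3 : Integrable (fun _ : ℝ => m^2 * 1) (gaussianReal 0 1) := integrable_const _
  have i23 : Integrable (fun x : ℝ => (2 * √(v:ℝ) * m) * x + m^2 * 1) (gaussianReal 0 1) :=
    i2.add i3
  rw [integral_add i1 i23, integral_add i2 i3]
  rw [integral_const_mul, integral_const_mul, integral_sq_std]
  have h1 : ∫ x : ℝ, x ∂(gaussianReal 0 1) = 0 := integral_id_std
  rw [h1]
  simp


lemma even_pow_nonneg (c : ℝ) (p : ℕ) : 0 ≤ c ^ (2*p) := by
  rw [pow_mul]; positivity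

lemma even_pow_bound (p : ℕ) (a b : ℝ) :
    (a + b) ^ (2*p) ≤ 2 ^ (2*p) * (a ^ (2*p) + b ^ (2*p)) := by
  have h1 : (a+b)^(2*p) = |a+b|^(2*p) := by
    rw [pow_mul, pow_mul, sq_abs]
  have h2 : |a+b|^(2*p) ≤ (|a|+|b|)^(2*p) :=
    pow_le_pow_left₀ (abs_nonneg _) (abs_add_le a b) _
  have h3 : (|a|+|b|)^(2*p) ≤ 2^(2*p - 1) * (|a|^(2*p) + |b|^(2*p)) :=
    add_pow_le (abs_nonneg a) (abs_nonneg b) _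
  have h4 : |a|^(2*p) = a^(2*p) := by rw [pow_mul, pow_mul, sq_abs]
  have h5 : |b|^(2*p) = b^(2*p) := by rw [pow_mul, pow_mul, sq_abs]
  have h6 : (2:ℝ)^(2*p-1) ≤ 2^(2*p) := pow_le_pow_right₀ (by norm_num) (by omega)
  rw [h4, h5] at h3
  have h7 : (0:ℝ) ≤ a^(2*p) + b^(2*p) := by
    have := even_pow_nonneg a p; have := even_pow_nonneg b p; linarith
  calc (a+b)^(2*p) = |a+b|^(2*p) := h1
    _ ≤ (|a|+|b|)^(2*p) := h2
    _ ≤ 2^(2*p-1) * (a^(2*p) + b^(2*p)) := h3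
    _ ≤ 2^(2*p) * (a^(2*p) + b^(2*p)) := mul_le_mul_of_nonneg_right h6 h7

lemma gauss_even_moment (p : ℕ) (hp : 1 ≤ p) : ∃ K, 0 < K ∧ ∀ (m : ℝ) (v : ℝ≥0),
    Integrable (fun x : ℝ => x^(2*p)) (gaussianReal m v) ∧
    ∫ x, x^(2*p) ∂(gaussianReal m v) ≤ K * (∫ x, x^2 ∂(gaussianReal m v))^p := by
  set M := ∫ x, x^(2*p) ∂(gaussianReal 0 1) with hM
  have hM0 : 0 ≤ M := integral_nonneg (fun x => even_pow_nonneg x p)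
  refine ⟨2^(2*p) * (M+1), by positivity, fun m v => ?_⟩
  have hK1 : (1:ℝ) ≤ 2^(2*p) * (M+1) := by
    have h1 : (1:ℝ) ≤ 2^(2*p) := one_le_pow₀ (by norm_num)
    nlinarith
  by_cases hv : v = 0
  · subst hv
    rw [gaussianReal_zero_var]
    constructor
    · exact integrable_dirac_of_meas (by fun_prop) m
    · rw [integral_dirac, integral_dirac]
      have h1 : m^(2*p) = (m^2)^p := by rw [pow_mul]
      have h2 : (m^2)^p ≤ 2^(2*p) * (M+1) * (m^2)^p := by
        nlinarith [pow_nonneg (sq_nonneg m) p]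
      linarith [h1 ▸ h2]
  · rw [← gauss_affine m v hv]
    have hle : ∀ x : ℝ, (√(v:ℝ) * x + m)^(2*p)
        ≤ 2^(2*p) * ((v:ℝ)^p * x^(2*p) + |m|^(2*p)) := by
      intro x
      have h1 := even_pow_bound p (√(v:ℝ) * x) m
      have h2 : (√(v:ℝ) * x)^(2*p) = (v:ℝ)^p * x^(2*p) := by
        rw [mul_pow, pow_mul, Real.sq_sqrt (v:ℝ≥0).coe_nonneg]
      have h3 : m^(2*p) = |m|^(2*p) := by rw [pow_mul, pow_mul, sq_abs]
      rw [h2, h3] at h1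
      exact h1
    have hGint : Integrable
        (fun x : ℝ => 2^(2*p) * ((v:ℝ)^p * x^(2*p) + |m|^(2*p)))
        (gaussianReal 0 1) :=
      (((integrable_pow_std (2*p)).const_mul _).add (integrable_const _)).const_mul _
    have hfint : Integrable (fun x : ℝ => (√(v:ℝ) * x + m)^(2*p)) (gaussianReal 0 1) := by
      refine hGint.mono'
        (((measurable_id.const_mul _).add_const m).pow_const (2*p)).aestronglyMeasurable
        (Filter.Eventually.of_forall fun x => ?_)
      rw [Real.norm_eq_abs, abs_of_nonneg (even_pow_nonneg _ p)]
      exact hle x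
    constructor
    · rw [integrable_map_measure (by fun_prop : Measurable fun x : ℝ => x^(2*p)).aestronglyMeasurable
        (by fun_prop : Measurable fun x : ℝ => √(v:ℝ) * x + m).aemeasurable]
      exact hfint
    · rw [integral_map (f := fun x : ℝ => x^(2*p)) (by fun_prop)
        (by fun_prop : Measurable fun x : ℝ => x^(2*p)).aestronglyMeasurable]
      have hmono : ∫ x, (√(v:ℝ) * x + m)^(2*p) ∂(gaussianReal 0 1)
          ≤ ∫ x, 2^(2*p) * ((v:ℝ)^p * x^(2*p) + |m|^(2*p)) ∂(gaussianReal 0 1) :=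
        integral_mono hfint hGint (fun x => hle x)
      have hGval : ∫ x, 2^(2*p) * ((v:ℝ)^p * x^(2*p) + |m|^(2*p)) ∂(gaussianReal 0 1)
          = 2^(2*p) * ((v:ℝ)^p * M + |m|^(2*p)) := by
        rw [integral_const_mul, integral_add ((integrable_pow_std (2*p)).const_mul _)
          (integrable_const _), integral_const_mul, integral_const]
        simp [hM]
      have hsq : ∫ x, x^2 ∂((gaussianReal 0 1).map (fun x => √(v:ℝ) * x + m))
          = (v:ℝ) + m^2 := by
        rw [gauss_affine m v hv]; exact integral_sq_gauss m v
      rw [hsq]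
      have hvp : (v:ℝ)^p ≤ ((v:ℝ) + m^2)^p :=
        pow_le_pow_left₀ (v:ℝ≥0).coe_nonneg (by nlinarith [sq_nonneg m]) p
      have hmp : |m|^(2*p) ≤ ((v:ℝ) + m^2)^p := by
        rw [pow_mul, sq_abs]
        exact pow_le_pow_left₀ (sq_nonneg m) (by linarith [(v:ℝ≥0).coe_nonneg]) p
      have h2p : (0:ℝ) < 2^(2*p) := by positivity
      calc ∫ x, (√(v:ℝ) * x + m)^(2*p) ∂(gaussianReal 0 1)
          ≤ 2^(2*p) * ((v:ℝ)^p * M + |m|^(2*p)) := hmono.trans (le_of_eq hGval)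
        _ ≤ 2^(2*p) * (((v:ℝ)+m^2)^p * M + ((v:ℝ)+m^2)^p) := by
            have := mul_le_mul_of_nonneg_right hvp hM0
            nlinarith
        _ = 2^(2*p) * (M+1) * ((v:ℝ)+m^2)^p := by ring


variable {Ω : Type*} [MeasurableSpace Ω] (P : Measure Ω)

lemma transfer_pow (f : Ω → ℝ) (hf : Measurable f) (m : ℝ) (v : ℝ≥0)
    (hmap : P.map f = gaussianReal m v) (k : ℕ) :
    (Integrable (fun x : ℝ => x^k) (gaussianReal m v) → Integrable (fun ω => f ω ^ k) P) ∧
    ∫ ω, f ω ^ k ∂P = ∫ x, x^k ∂(gaussianReal m v) := by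
  constructor
  · intro hint
    rw [← hmap] at hint
    have := (integrable_map_measure
      ((by fun_prop : Measurable fun x : ℝ => x^k).aestronglyMeasurable)
      hf.aemeasurable).mp hint
    exact this
  · rw [← hmap, integral_map hf.aemeasurable
      ((by fun_prop : Measurable fun x : ℝ => x^k).aestronglyMeasurable)]

lemma gauss_process_moment (p : ℕ) (hp : 1 ≤ p) :
    ∃ K, 0 < K ∧ ∀ (f : Ω → ℝ), Measurable f →
      (∃ m : ℝ, ∃ v : ℝ≥0, P.map f = gaussianReal m v) →
      Integrable (fun ω => f ω ^ (2*p)) P ∧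
      Integrable (fun ω => f ω ^ 2) P ∧
      ∫ ω, f ω ^ (2*p) ∂P ≤ K * (∫ ω, f ω ^ 2 ∂P)^p := by
  obtain ⟨K, hK, h⟩ := gauss_even_moment p hp
  obtain ⟨K1, hK1, h1⟩ := gauss_even_moment 1 le_rfl
  refine ⟨K, hK, fun f hf ⟨m, v, hmap⟩ => ?_⟩
  have t2p := transfer_pow P f hf m v hmap (2*p)
  have t2 := transfer_pow P f hf m v hmap 2
  refine ⟨t2p.1 (h m v).1, t2.1 ?_, ?_⟩
  · have := (h1 m v).1
    simpa using this
  · rw [t2p.2, t2.2]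
    exact (h m v).2


variable {Ω : Type*} [MeasurableSpace Ω] {P : Measure Ω}

lemma diff_gaussian {Z : ℝ → Ω → ℝ} (hZ : IsGaussianProcess P Z) (s t : ℝ) :
    ∃ m : ℝ, ∃ v : ℝ≥0, P.map (fun ω => Z t ω - Z s ω) = gaussianReal m v := by
  obtain ⟨m, v, h⟩ := hZ.2 2 ![t, s] ![1, -1]
  refine ⟨m, v, ?_⟩
  rw [← h]
  congr 1
  funext ω
  simp [Fin.sum_univ_two]
  ring

lemma single_gaussian {Z : ℝ → Ω → ℝ} (hZ : IsGaussianProcess P Z) (t : ℝ) :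
    ∃ m : ℝ, ∃ v : ℝ≥0, P.map (Z t) = gaussianReal m v := by
  obtain ⟨m, v, h⟩ := hZ.2 1 ![t] ![1]
  refine ⟨m, v, ?_⟩
  rw [← h]
  congr 1
  funext ω
  simp [Fin.sum_univ_one]

/-- second moment of the fBm increment -/
lemma fbm_increment_sq {H : ℝ} {B : ℝ → Ω → ℝ} [IsProbabilityMeasure P]
    (hB : IsFBM P H B) (hH : 0 < H) (s t : ℝ) (hs : 0 ≤ s) (ht : 0 ≤ t) :
    ∫ ω, (B t ω - B s ω)^2 ∂P = |t - s| ^ (2*H) := by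
  obtain ⟨K1, hK1, hmom⟩ := gauss_process_moment P 1 le_rfl
  have hBt2 : Integrable (fun ω => B t ω ^ 2) P :=
    (hmom (B t) (hB.gaussian.1 t) (single_gaussian hB.gaussian t)).2.1
  have hBs2 : Integrable (fun ω => B s ω ^ 2) P :=
    (hmom (B s) (hB.gaussian.1 s) (single_gaussian hB.gaussian s)).2.1
  have hsum : Integrable (fun ω => B t ω ^ 2 + B s ω ^ 2) P := hBt2.add hBs2
  have hBts : Integrable (fun ω => B t ω * B s ω) P := by
    refine hsum.mono' (((hB.gaussian.1 t).mul (hB.gaussian.1 s)).aestronglyMeasurable)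
      (Filter.Eventually.of_forall fun ω => ?_)
    rw [Real.norm_eq_abs, abs_mul]
    nlinarith [sq_nonneg (|B t ω| - |B s ω|), sq_abs (B t ω), sq_abs (B s ω), abs_nonneg (B t ω),
      abs_nonneg (B s ω)]
  have hexp : (fun ω => (B t ω - B s ω)^2)
      = fun ω => B t ω ^ 2 - (2 * (B t ω * B s ω) - B s ω ^ 2) := by
    funext ω; ring
  have hmid : Integrable (fun ω => 2 * (B t ω * B s ω) - B s ω ^ 2) P :=
    (hBts.const_mul 2).sub hBs2
  rw [hexp, integral_sub hBt2 hmid,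
    integral_sub (hBts.const_mul 2) hBs2, integral_const_mul]
  have htt : ∫ ω, B t ω ^ 2 ∂P = t ^ (2*H) := by
    have h := hB.cov t t ht ht
    rw [sub_self, abs_zero] at h
    have h0 : (0:ℝ) ^ (2*H) = 0 := Real.zero_rpow (by positivity)
    rw [h0] at h
    have hh : (fun ω => B t ω ^ 2) = fun ω => B t ω * B t ω := by funext ω; ring
    rw [hh, h]
    ring
  have hss : ∫ ω, B s ω ^ 2 ∂P = s ^ (2*H) := by
    have h := hB.cov s s hs hs
    rw [sub_self, abs_zero, Real.zero_rpow (by positivity : 2*H ≠ 0)] at h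
    have hh : (fun ω => B s ω ^ 2) = fun ω => B s ω * B s ω := by funext ω; ring
    rw [hh, h]
    ring
  have hcov := hB.cov t s ht hs
  rw [abs_sub_comm] at hcov
  rw [htt, hss, hcov]
  ring


lemma Y_selfsim_sq {H : ℝ} {Y : ℝ → Ω → ℝ} (hmeas : ∀ t : ℝ, Measurable (Y t))
    (hss : ∀ c : ℝ, 0 < c → ∀ (n : ℕ) (t : Fin n → ℝ),
      P.map (fun ω => fun i => Y (c * t i) ω) = P.map (fun ω => fun i => c ^ H * Y (t i) ω))
    (c : ℝ) (hc : 0 < c) (a b : ℝ) :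
    ∫ ω, (Y (c*a) ω - Y (c*b) ω)^2 ∂P
      = c ^ (2*H) * ∫ ω, (Y a ω - Y b ω)^2 ∂P := by
  have h := hss c hc 2 ![a, b]
  have hgm : Measurable (fun x : Fin 2 → ℝ => (x 0 - x 1)^2) :=
    ((measurable_pi_apply 0).sub (measurable_pi_apply 1)).pow_const 2
  have hm1 : Measurable (fun ω => fun i : Fin 2 => Y (c * ![a,b] i) ω) :=
    measurable_pi_lambda _ (fun _ => hmeas _)
  have hm2 : Measurable (fun ω => fun i : Fin 2 => c^H * Y (![a,b] i) ω) :=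
    measurable_pi_lambda _ (fun _ => (hmeas _).const_mul _)
  have e1 : ∫ x, (fun x : Fin 2 → ℝ => (x 0 - x 1)^2) x
        ∂(P.map (fun ω => fun i : Fin 2 => Y (c * ![a,b] i) ω))
      = ∫ x, (fun x : Fin 2 → ℝ => (x 0 - x 1)^2) x
        ∂(P.map (fun ω => fun i : Fin 2 => c^H * Y (![a,b] i) ω)) := by rw [h]
  rw [integral_map hm1.aemeasurable hgm.aestronglyMeasurable,
      integral_map hm2.aemeasurable hgm.aestronglyMeasurable] at e1
  simp only [Matrix.cons_val_zero, Matrix.cons_val_one, Matrix.head_cons] at e1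
  rw [e1]
  have hfac : ∀ ω, (c^H * Y a ω - c^H * Y b ω)^2 = c^(2*H) * (Y a ω - Y b ω)^2 := by
    intro ω
    have h2 : (c^H)^(2:ℕ) = c^(2*H) := by
      rw [← Real.rpow_natCast (c^H) 2, ← Real.rpow_mul hc.le]
      norm_num
      ring_nf
    calc (c^H * Y a ω - c^H * Y b ω)^2 = (c^H)^(2:ℕ) * (Y a ω - Y b ω)^2 := by ring
      _ = c^(2*H) * (Y a ω - Y b ω)^2 := by rw [h2]
  simp_rw [hfac]
  rw [integral_const_mul]


end GaussAux

open GaussAux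

/-- For a perturbed fBm such that `p = 1/H` is a positive integer, with
`A_{0,p} = C₀^p E[Z^p]` (`Z` standard normal): there is `C > 0` such that for
every `N ≥ 1` and `1 ≤ i ≤ N-1`,
`E[((X_{t_{i+1}} - X_{t_i})^p - A_{0,p}/N)²] ≤ C/N²`. -/
theorem stmt_10 {Ω : Type*} [MeasurableSpace Ω] (P : Measure Ω) [IsProbabilityMeasure P]
    (H C₀ : ℝ) (hH : H ∈ Set.Ioo (0:ℝ) 1) (B Y X : ℝ → Ω → ℝ)
    (hX : IsPerturbedFBM P H C₀ B Y X)
    (p : ℕ) (hp : 1 ≤ p) (hpH : (p : ℝ) * H = 1) :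
    ∃ C > 0, ∀ N : ℕ, 1 ≤ N → ∀ i : ℕ, 1 ≤ i → i < N →
      ∫ ω, ((X (((i:ℝ)+1)/N) ω - X ((i:ℝ)/N) ω) ^ p
          - C₀ ^ p * gaussMoment p / N)^2 ∂P ≤ C / (N:ℝ)^2 := by
  obtain ⟨hH0, hH1⟩ := hH
  obtain ⟨K, hK, hKmom⟩ := gauss_process_moment P p hp
  obtain ⟨CY, hCY, hYincr⟩ := hX.Yincr
  set A : ℝ := C₀ ^ p * gaussMoment p with hA
  have hC₀ := hX.C₀_pos
  refine ⟨2 * 2^(2*p) * (C₀^(2*p) * K + K * CY^p) + 2 * A^2 + 1, by positivity, ?_⟩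
  intro N hN i hi hiN
  have hNpos : (0:ℝ) < N := by
    have : (0:ℕ) < N := lt_of_lt_of_le Nat.zero_lt_one hN
    exact_mod_cast this
  have hipos : (0:ℝ) < i := by
    have : (0:ℕ) < i := lt_of_lt_of_le Nat.zero_lt_one hi
    exact_mod_cast this
  set s : ℝ := (i:ℝ)/N with hsdef
  set t : ℝ := ((i:ℝ)+1)/N with htdef
  have hs0 : 0 ≤ s := by positivity
  have ht0 : 0 ≤ t := by positivity
  have hN2 : (0:ℝ) < (N:ℝ)^2 := by positivity
  -- B increment
  have hBmeas : Measurable (fun ω => B t ω - B s ω) :=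
    (hX.fbm.gaussian.1 t).sub (hX.fbm.gaussian.1 s)
  have hBmom := hKmom _ hBmeas (diff_gaussian hX.fbm.gaussian s t)
  have hB2 : ∫ ω, (B t ω - B s ω)^2 ∂P = (1/(N:ℝ)) ^ (2*H) := by
    rw [fbm_increment_sq hX.fbm hH0 s t hs0 ht0]
    congr 1
    have hts : t - s = 1/(N:ℝ) := by rw [htdef, hsdef]; ring
    rw [hts]
    exact abs_of_pos (by positivity)
  have hNH : ((1/(N:ℝ)) ^ (2*H))^p = 1/(N:ℝ)^2 := by
    rw [← Real.rpow_natCast ((1/(N:ℝ)) ^ (2*H)) p, ← Real.rpow_mul (by positivity)]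
    have h2 : 2*H*(p:ℝ) = 2 := by nlinarith
    rw [h2, show (2:ℝ) = ((2:ℕ):ℝ) by norm_num, Real.rpow_natCast]
    rw [div_pow, one_pow]
  have hBbound : ∫ ω, (B t ω - B s ω)^(2*p) ∂P ≤ K * (1/(N:ℝ)^2) := by
    calc ∫ ω, (B t ω - B s ω)^(2*p) ∂P
        ≤ K * (∫ ω, (B t ω - B s ω)^2 ∂P)^p := hBmom.2.2
      _ = K * (1/(N:ℝ)^2) := by rw [hB2, hNH]
  -- Y increment
  have hYmeas : Measurable (fun ω => Y t ω - Y s ω) :=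
    (hX.Ygaussian.1 t).sub (hX.Ygaussian.1 s)
  have hYmom := hKmom _ hYmeas (diff_gaussian hX.Ygaussian s t)
  have hY2 : ∫ ω, (Y t ω - Y s ω)^2 ∂P ≤ CY * (1/(N:ℝ)) ^ (2*H) := by
    have hc : (0:ℝ) < 1/N := by positivity
    have e := Y_selfsim_sq hX.Ygaussian.1 hX.Yselfsim (1/(N:ℝ)) hc ((i:ℝ)+1) (i:ℝ)
    have ht' : (1/(N:ℝ)) * ((i:ℝ)+1) = t := by rw [htdef]; ring
    have hs' : (1/(N:ℝ)) * (i:ℝ) = s := by rw [hsdef]; ring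
    rw [ht', hs'] at e
    rw [e]
    have hY1 := hYincr (i:ℝ) ((i:ℝ)+1) hipos (lt_add_one _)
    have hle1 : ((i:ℝ)) ^ (2*H-2) ≤ 1 :=
      Real.rpow_le_one_of_one_le_of_nonpos (by exact_mod_cast hi) (by linarith)
    have hrp : (0:ℝ) ≤ (1/(N:ℝ)) ^ (2*H) := Real.rpow_nonneg (by positivity) _
    calc (1/(N:ℝ)) ^ (2*H) * ∫ ω, (Y ((i:ℝ)+1) ω - Y (i:ℝ) ω)^2 ∂P
        ≤ (1/(N:ℝ)) ^ (2*H) * (CY * ((i:ℝ)) ^ (2*H-2)) :=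
          mul_le_mul_of_nonneg_left hY1 hrp
      _ ≤ CY * (1/(N:ℝ)) ^ (2*H) := by
          nlinarith [mul_le_mul_of_nonneg_left hle1 (mul_nonneg hrp hCY.le)]
  have hY2nonneg : 0 ≤ ∫ ω, (Y t ω - Y s ω)^2 ∂P :=
    integral_nonneg (fun ω => sq_nonneg _)
  have hYbound : ∫ ω, (Y t ω - Y s ω)^(2*p) ∂P ≤ K * (CY^p * (1/(N:ℝ)^2)) := by
    calc ∫ ω, (Y t ω - Y s ω)^(2*p) ∂P
        ≤ K * (∫ ω, (Y t ω - Y s ω)^2 ∂P)^p := hYmom.2.2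
      _ ≤ K * (CY * (1/(N:ℝ)) ^ (2*H))^p := by
          have := pow_le_pow_left₀ hY2nonneg hY2 p
          exact mul_le_mul_of_nonneg_left this hK.le
      _ = K * (CY^p * (1/(N:ℝ)^2)) := by rw [mul_pow, hNH]
  -- pointwise bound
  have hXeq : ∀ ω, X t ω - X s ω = C₀ * (B t ω - B s ω) + (Y t ω - Y s ω) := by
    intro ω; rw [hX.Xdef, hX.Xdef]; ring
  have hpt : ∀ ω, ((X t ω - X s ω)^p - A/N)^2
      ≤ 2 * 2^(2*p) * (C₀^(2*p) * (B t ω - B s ω)^(2*p) + (Y t ω - Y s ω)^(2*p))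
        + 2*(A/(N:ℝ))^2 := by
    have key : ∀ d a b : ℝ, ((a+b)^p - d)^2 ≤ 2*2^(2*p)*(a^(2*p)+b^(2*p)) + 2*d^2 := by
      intro d a b
      have h1 : ((a+b)^p - d)^2 ≤ 2*((a+b)^p)^2 + 2*d^2 := by
        nlinarith [sq_nonneg ((a+b)^p + d)]
      have h2 : ((a+b)^p)^2 = (a+b)^(2*p) := by rw [← pow_mul, mul_comm]
      have h3 := even_pow_bound p a b
      rw [h2] at h1
      linarith
    intro ω
    rw [hXeq ω]
    have hk := key (A/(N:ℝ)) (C₀ * (B t ω - B s ω)) (Y t ω - Y s ω)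
    rw [mul_pow] at hk
    linarith
  -- integrable majorant
  have hg1 : Integrable (fun ω => C₀^(2*p) * (B t ω - B s ω)^(2*p)
      + (Y t ω - Y s ω)^(2*p)) P := (hBmom.1.const_mul _).add hYmom.1
  have hg2 : Integrable (fun ω => 2 * 2^(2*p) * (C₀^(2*p) * (B t ω - B s ω)^(2*p)
      + (Y t ω - Y s ω)^(2*p))) P := hg1.const_mul _
  have hg : Integrable (fun ω => 2 * 2^(2*p) * (C₀^(2*p) * (B t ω - B s ω)^(2*p)
      + (Y t ω - Y s ω)^(2*p)) + 2*(A/(N:ℝ))^2) P := hg2.add (integrable_const _)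
  have hmono : ∫ ω, ((X t ω - X s ω)^p - A/N)^2 ∂P
      ≤ ∫ ω, (2 * 2^(2*p) * (C₀^(2*p) * (B t ω - B s ω)^(2*p)
        + (Y t ω - Y s ω)^(2*p)) + 2*(A/(N:ℝ))^2) ∂P :=
    integral_mono_of_nonneg (Filter.Eventually.of_forall fun ω => sq_nonneg _)
      hg (Filter.Eventually.of_forall hpt)
  have hval : ∫ ω, (2 * 2^(2*p) * (C₀^(2*p) * (B t ω - B s ω)^(2*p)
        + (Y t ω - Y s ω)^(2*p)) + 2*(A/(N:ℝ))^2) ∂P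
      = 2 * 2^(2*p) * (C₀^(2*p) * ∫ ω, (B t ω - B s ω)^(2*p) ∂P
        + ∫ ω, (Y t ω - Y s ω)^(2*p) ∂P) + 2*(A/(N:ℝ))^2 := by
    rw [integral_add hg2 (integrable_const _), integral_const_mul,
      integral_add (hBmom.1.const_mul _) hYmom.1, integral_const_mul, integral_const]
    simp
  have hIBnn : 0 ≤ ∫ ω, (B t ω - B s ω)^(2*p) ∂P :=
    integral_nonneg (fun ω => even_pow_nonneg _ p)
  have hIYnn : 0 ≤ ∫ ω, (Y t ω - Y s ω)^(2*p) ∂P :=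
    integral_nonneg (fun ω => even_pow_nonneg _ p)
  calc ∫ ω, ((X t ω - X s ω)^p - A/N)^2 ∂P
      ≤ 2 * 2^(2*p) * (C₀^(2*p) * ∫ ω, (B t ω - B s ω)^(2*p) ∂P
        + ∫ ω, (Y t ω - Y s ω)^(2*p) ∂P) + 2*(A/(N:ℝ))^2 := hmono.trans (le_of_eq hval)
    _ ≤ 2 * 2^(2*p) * (C₀^(2*p) * (K * (1/(N:ℝ)^2))
        + K * (CY^p * (1/(N:ℝ)^2))) + 2*(A/(N:ℝ))^2 := by
        gcongr
    _ = (2 * 2^(2*p) * (C₀^(2*p) * K + K * CY^p) + 2 * A^2) / (N:ℝ)^2 := by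
        field_simp
    _ ≤ (2 * 2^(2*p) * (C₀^(2*p) * K + K * CY^p) + 2 * A^2 + 1) / (N:ℝ)^2 := by
        exact (div_le_div_iff_of_pos_right hN2).mpr (by linarith)


end
end

section
/- Let (B^H_t)_{t≥0} be a fractional Brownian motion with Hurst index H ∈ (0,1) such that p = 1/H is a positive integer, and let Z be a standard normal random variable. Then there is a constant C > 0 such that for every N ≥ 1 and all i, j ≥ 0 with i ≠ j, |E[( (B^H_{t_{i+1}} − B^H_{t_i})^p − E[Z^p]/N )( (B^H_{t_{j+1}} − B^H_{t_j})^p − E[Z^p]/N )]| ≤ C N^{−2} |ρ_H(i−j)|, where ρ_H(v) = (1/2)(|v+1|^{2H} + |v−1|^{2H} − 2|v|^{2H}) for v ∈ ℤ. -/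
open MeasureTheory ProbabilityTheory Filter

noncomputable section

/-- The correlation function of the unit-spacing increments of a fBm:
`ρ_H(v) = (1/2)(|v+1|^{2H} + |v-1|^{2H} - 2|v|^{2H})` for `v ∈ ℤ`. -/
def rhoH (H : ℝ) (v : ℤ) : ℝ :=
  (1/2) * (|(v:ℝ) + 1| ^ (2*H) + |(v:ℝ) - 1| ^ (2*H) - 2 * |(v:ℝ)| ^ (2*H))

namespace FbmAux

open Real Polynomial
open scoped ENNReal NNReal


lemma gauss01_eq : gaussianReal 0 1 =
    volume.withDensity (fun x => ENNReal.ofReal (gaussianPDFReal 0 1 x)) := by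
  rw [gaussianReal_of_var_ne_zero 0 one_ne_zero]; rfl

lemma integral_gauss01 (g : ℝ → ℝ) :
    ∫ x, g x ∂(gaussianReal 0 1) = ∫ x, gaussianPDFReal 0 1 x * g x := by
  rw [gauss01_eq]
  have h : (fun x => ENNReal.ofReal (gaussianPDFReal 0 1 x))
      = fun x => (((gaussianPDFReal 0 1 x).toNNReal : ℝ≥0) : ℝ≥0∞) := rfl
  rw [h, integral_withDensity_eq_integral_smul
    ((measurable_gaussianPDFReal 0 1).real_toNNReal) g]
  congr 1; funext x
  simp [NNReal.smul_def, Real.coe_toNNReal _ (gaussianPDFReal_nonneg 0 1 x)]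

lemma pdf01_eq (x : ℝ) : gaussianPDFReal 0 1 x = (√(2 * π))⁻¹ * rexp (-(1/2) * x ^ 2) := by
  rw [gaussianPDFReal]
  push_cast
  ring_nf

lemma integrable_pow_mul_pdf (n : ℕ) :
    Integrable (fun x : ℝ => x ^ n * gaussianPDFReal 0 1 x) := by
  have h := integrable_rpow_mul_exp_neg_mul_sq (b := 1/2) (by norm_num)
    (s := (n : ℝ)) (lt_of_lt_of_le (by norm_num) (Nat.cast_nonneg n))
  simp_rw [Real.rpow_natCast] at h
  apply (h.mul_const ((√(2 * π))⁻¹)).congr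
  filter_upwards with x
  rw [pdf01_eq]
  ring

lemma integrable_pow_gauss01 (n : ℕ) :
    Integrable (fun x : ℝ => x ^ n) (gaussianReal 0 1) := by
  rw [gauss01_eq, integrable_withDensity_iff ((measurable_gaussianPDFReal 0 1).ennreal_ofReal)
    (ae_of_all _ fun x => ENNReal.ofReal_lt_top)]
  apply (integrable_pow_mul_pdf n).congr
  filter_upwards with x
  rw [ENNReal.toReal_ofReal (gaussianPDFReal_nonneg 0 1 x)]





lemma hasDerivAt_negpdf (x : ℝ) :
    HasDerivAt (fun y : ℝ => -((√(2 * π))⁻¹ * rexp (-(1/2) * y ^ 2)))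
      (x * ((√(2 * π))⁻¹ * rexp (-(1/2) * x ^ 2))) x := by
  have h1 : HasDerivAt (fun y : ℝ => -(1/2) * y ^ 2) (-(1/2) * (2 * x)) x := by
    simpa using ((hasDerivAt_pow 2 x).const_mul (-(1/2:ℝ)))
  have h2 := (h1.exp.const_mul ((√(2 * π))⁻¹)).neg
  exact h2.congr_deriv (by ring)

lemma integrable_pow_mul_pdf' (n : ℕ) (c : ℝ) :
    Integrable (fun x : ℝ => c * x ^ n * gaussianPDFReal 0 1 x) := by
  apply ((integrable_pow_mul_pdf n).const_mul c).congr
  filter_upwards with x; ring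

lemma gaussMoment_rec (n : ℕ) : gaussMoment (n + 2) = (n + 1) * gaussMoment n := by
  have key : ∫ x : ℝ, x ^ (n+1) * (x * ((√(2 * π))⁻¹ * rexp (-(1/2) * x ^ 2)))
      = - ∫ x : ℝ, ((n+1 : ℝ) * x ^ n) * (-((√(2 * π))⁻¹ * rexp (-(1/2) * x ^ 2))) := by
    apply integral_mul_deriv_eq_deriv_mul_of_integrable
      (u := fun x => x ^ (n+1)) (u' := fun x => (n+1 : ℝ) * x ^ n)
      (fun x _ => by simpa using hasDerivAt_pow (n+1) x) (fun x _ => hasDerivAt_negpdf x)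
    · apply (integrable_pow_mul_pdf (n+2)).congr
      filter_upwards with x
      simp only [Pi.mul_apply, pdf01_eq]; ring
    · apply (integrable_pow_mul_pdf' n (-(n+1:ℝ))).congr
      filter_upwards with x
      simp only [Pi.mul_apply, pdf01_eq]; ring
    · apply (integrable_pow_mul_pdf' (n+1) (-1)).congr
      filter_upwards with x
      simp only [Pi.mul_apply, pdf01_eq]; ring
  rw [gaussMoment, gaussMoment, integral_gauss01, integral_gauss01]
  rw [show (∫ x : ℝ, gaussianPDFReal 0 1 x * x ^ (n+2))
      = ∫ x : ℝ, x ^ (n+1) * (x * ((√(2 * π))⁻¹ * rexp (-(1/2) * x ^ 2))) by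
    congr 1; funext x; rw [pdf01_eq]; ring]
  rw [key, ← integral_neg, ← integral_const_mul]
  congr 1; funext x; rw [pdf01_eq]; ring

lemma gaussMoment_zero : gaussMoment 0 = 1 := by
  simp [gaussMoment]

lemma gaussMoment_one : gaussMoment 1 = 0 := by
  have key : ∫ x : ℝ, (1:ℝ) * (x * ((√(2 * π))⁻¹ * rexp (-(1/2) * x ^ 2)))
      = - ∫ x : ℝ, (0:ℝ) * (-((√(2 * π))⁻¹ * rexp (-(1/2) * x ^ 2))) := by
    apply integral_mul_deriv_eq_deriv_mul_of_integrable
      (u := fun _ => (1:ℝ)) (u' := fun _ => (0:ℝ))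
      (fun x _ => hasDerivAt_const x 1) (fun x _ => hasDerivAt_negpdf x)
    · apply (integrable_pow_mul_pdf 1).congr
      filter_upwards with x
      simp only [Pi.mul_apply, pdf01_eq]; ring
    · apply (integrable_zero ℝ ℝ (volume : Measure ℝ)).congr
      filter_upwards with x; simp
    · apply (integrable_pow_mul_pdf' 0 (-1)).congr
      filter_upwards with x
      simp only [Pi.mul_apply, pdf01_eq]; ring
  simp only [zero_mul, integral_const, smul_eq_mul, mul_zero, neg_zero] at key
  rw [gaussMoment, integral_gauss01]
  rw [show (∫ x : ℝ, gaussianPDFReal 0 1 x * x ^ 1)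
      = ∫ x : ℝ, (1:ℝ) * (x * ((√(2 * π))⁻¹ * rexp (-(1/2) * x ^ 2))) by
    congr 1; funext x; rw [pdf01_eq]; ring]
  rw [key]

lemma gaussMoment_two : gaussMoment 2 = 1 := by
  have := gaussMoment_rec 0
  rw [gaussMoment_zero] at this
  norm_num at this
  exact this

lemma gaussMoment_even (k : ℕ) :
    gaussMoment (2 * k) = (2 * k).factorial / (2 ^ k * k.factorial) := by
  induction k with
  | zero => simp [gaussMoment_zero]
  | succ k ih =>
    have h2 : 2 * (k + 1) = (2 * k) + 2 := by ring
    rw [h2, gaussMoment_rec, ih]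
    have e1 : ((2*k) + 2).factorial = ((2*k)+2) * (((2*k)+1) * (2*k).factorial) := by
      rw [Nat.factorial_succ, Nat.factorial_succ]
    rw [e1]
    have hne : (2:ℝ) ^ k * (k.factorial : ℝ) ≠ 0 := by positivity
    have hne2 : (2:ℝ) ^ (k+1) * ((k+1).factorial : ℝ) ≠ 0 := by positivity
    field_simp
    push_cast [Nat.factorial_succ]
    ring

lemma gaussMoment_odd (k : ℕ) : gaussMoment (2 * k + 1) = 0 := by
  induction k with
  | zero => simpa using gaussMoment_one
  | succ k ih =>
    have h2 : 2 * (k + 1) + 1 = (2 * k + 1) + 2 := by ring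
    rw [h2, gaussMoment_rec, ih, mul_zero]




lemma gauss_scale (v : ℝ≥0) : (gaussianReal 0 1).map (fun x => √v * x) = gaussianReal 0 v := by
  have h := gaussianReal_map_const_mul (μ := 0) (v := 1) (√v)
  have h2 : (⟨(√v)^2, sq_nonneg _⟩ * 1 : ℝ≥0) = v := by
    ext
    show (√(v:ℝ))^2 * 1 = (v:ℝ)
    rw [mul_one]; exact Real.sq_sqrt v.2
  rw [show ((√v) * · ) = (fun x => √v * x) from rfl] at h
  rw [h, mul_zero]; exact congrArg (gaussianReal 0) h2

lemma gauss_decomp (μ : ℝ) (v : ℝ≥0) :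
    gaussianReal μ v = (gaussianReal 0 1).map (fun x => √v * x + μ) := by
  have h1 : (fun x => √v * x + μ) = (fun x => x + μ) ∘ (fun x => √v * x) := rfl
  rw [h1, ← Measure.map_map (show Measurable fun x : ℝ => x + μ by fun_prop)
    (show Measurable fun x : ℝ => √v * x by fun_prop), gauss_scale]
  have h := gaussianReal_map_add_const (μ := 0) (v := v) μ
  rw [show (· + μ) = (fun x : ℝ => x + μ) from rfl] at h
  rw [h, zero_add]

lemma integral_pow_gauss_centered (v : ℝ≥0) (n : ℕ) :
    ∫ x, x ^ n ∂(gaussianReal 0 v) = (√v) ^ n * gaussMoment n := by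
  rw [← gauss_scale v, integral_map (by fun_prop) (by fun_prop)]
  simp_rw [mul_pow]
  rw [integral_const_mul]
  rfl

lemma integrable_pow_gauss (μ : ℝ) (v : ℝ≥0) (n : ℕ) :
    Integrable (fun x : ℝ => x ^ n) (gaussianReal μ v) := by
  rw [gauss_decomp μ v, integrable_map_measure (by fun_prop) (by fun_prop)]
  have : ((fun x : ℝ => x ^ n) ∘ (fun x => √v * x + μ))
      = fun x : ℝ => ∑ k ∈ Finset.range (n+1), ((√v)^k * μ^(n-k) * n.choose k) * x ^ k := by
    funext x
    simp only [Function.comp_apply, add_pow, mul_pow]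
    congr 1; funext k; ring
  rw [this]
  apply integrable_finset_sum
  intro k _
  exact (integrable_pow_gauss01 k).const_mul _

lemma integral_id_gauss (μ : ℝ) (v : ℝ≥0) : ∫ x, x ∂(gaussianReal μ v) = μ := by
  rw [gauss_decomp μ v, integral_map (by fun_prop) measurable_id'.aestronglyMeasurable]
  have h1 : Integrable (fun x : ℝ => √v * x) (gaussianReal 0 1) := by
    apply ((integrable_pow_gauss01 1).const_mul (√v)).congr
    filter_upwards with x; simp
  rw [integral_add h1 (integrable_const μ), integral_const, integral_const_mul]
  have : ∫ x, x ∂(gaussianReal 0 1) = gaussMoment 1 := by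
    rw [gaussMoment]; congr 1; funext x; simp
  rw [this, gaussMoment_one]
  simp

lemma integral_sq_gauss_centered (v : ℝ≥0) : ∫ x, x ^ 2 ∂(gaussianReal 0 v) = v := by
  rw [integral_pow_gauss_centered, gaussMoment_two, mul_one, sq]
  exact Real.mul_self_sqrt v.2



def gcoef (p : ℕ) (r : ℝ) : ℝ :=
  ((X ^ 2 + C (2 * r) * X + 1 : Polynomial ℝ) ^ p).coeff p

/-- `gcoef p` as a polynomial in `r`. -/
def Gpoly (p : ℕ) : Polynomial ℝ :=
  ((X ^ 2 + C (2 * (X : Polynomial ℝ)) * X + 1 : Polynomial (Polynomial ℝ)) ^ p).coeff p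

lemma gcoef_eq_eval (p : ℕ) (r : ℝ) : gcoef p r = (Gpoly p).eval r := by
  have h : ((X ^ 2 + C (2 * (X : Polynomial ℝ)) * X + 1 : Polynomial (Polynomial ℝ)) ^ p).map
      (evalRingHom r) = (X ^ 2 + C (2 * r) * X + 1 : Polynomial ℝ) ^ p := by
    rw [Polynomial.map_pow]
    congr 1
    rw [Polynomial.map_add, Polynomial.map_add, Polynomial.map_one, Polynomial.map_mul,
      Polynomial.map_pow, Polynomial.map_X, map_C]
    simp [evalRingHom]
  rw [gcoef, ← h, Polynomial.coeff_map, Gpoly]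
  rfl

def polyBound (f : Polynomial ℝ) : ℝ := ∑ i ∈ Finset.range (f.natDegree + 1), |f.coeff i|

lemma abs_eval_le (f : Polynomial ℝ) {r : ℝ} (hr : |r| ≤ 1) : |f.eval r| ≤ polyBound f := by
  rw [Polynomial.eval_eq_sum_range]
  refine (Finset.abs_sum_le_sum_abs _ _).trans ?_
  apply Finset.sum_le_sum
  intro i _
  rw [abs_mul, abs_pow]
  calc |f.coeff i| * |r| ^ i ≤ |f.coeff i| * 1 := by
        apply mul_le_mul_of_nonneg_left (pow_le_one₀ (abs_nonneg r) hr) (abs_nonneg _)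
    _ = |f.coeff i| := mul_one _

lemma abs_eval_sub_eval_zero_le (f : Polynomial ℝ) {r : ℝ} (hr : |r| ≤ 1) :
    |f.eval r - f.eval 0| ≤ polyBound (f - C (f.eval 0)).divX * |r| := by
  set g : Polynomial ℝ := f - C (f.eval 0) with hg
  have hg0 : g.coeff 0 = 0 := by
    rw [Polynomial.coeff_zero_eq_eval_zero]
    simp [hg]
  have hgX : X * g.divX = g := by
    have := Polynomial.X_mul_divX_add g
    rwa [hg0, map_zero, add_zero] at this
  have heval : f.eval r - f.eval 0 = r * (g.divX.eval r) := by
    have h5 : g.eval r = f.eval r - f.eval 0 := by simp [hg]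
    have h6 := congrArg (Polynomial.eval r) hgX
    rw [Polynomial.eval_mul, Polynomial.eval_X] at h6
    rw [← h5, ← h6]
  rw [heval, abs_mul, mul_comm]
  exact mul_le_mul_of_nonneg_right (abs_eval_le _ hr) (abs_nonneg r)

lemma gcoef_zero (p : ℕ) :
    gcoef p 0 = ∑ k ∈ Finset.range (p + 1), (p.choose k : ℝ) * (if p = 2 * k then 1 else 0) := by
  rw [gcoef]
  have h1 : (X ^ 2 + C (2 * (0:ℝ)) * X + 1 : Polynomial ℝ) = X ^ 2 + 1 := by
    simp
  rw [h1, add_pow]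
  rw [Polynomial.finset_sum_coeff]
  congr 1
  funext k
  have : (X ^ 2 : Polynomial ℝ) ^ k * 1 ^ (p - k) * (p.choose k : Polynomial ℝ)
      = C ((p.choose k : ℝ)) * X ^ (2 * k) := by
    rw [one_pow, mul_one, ← pow_mul]
    rw [show ((p.choose k : ℕ) : Polynomial ℝ) = C ((p.choose k : ℝ)) by simp]
    ring
  rw [this, Polynomial.coeff_C_mul, Polynomial.coeff_X_pow]

lemma gcoef_zero_even (q : ℕ) : gcoef (2 * q) 0 = ((2*q).choose q : ℝ) := by
  rw [gcoef_zero]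
  rw [Finset.sum_eq_single q]
  · simp
  · intro k hk hkq
    have : ¬ (2 * q = 2 * k) := by omega
    simp [this]
  · intro h
    exfalso
    apply h
    simp only [Finset.mem_range]
    omega

lemma gcoef_zero_odd (q : ℕ) : gcoef (2 * q + 1) 0 = 0 := by
  rw [gcoef_zero]
  apply Finset.sum_eq_zero
  intro k _
  have : ¬ (2 * q + 1 = 2 * k) := by omega
  simp [this]

lemma key_identity (p : ℕ) :
    gaussMoment (2 * p) * gcoef p 0 = ((2 * p).choose p : ℝ) * gaussMoment p ^ 2 := by
  rcases Nat.even_or_odd p with ⟨q, hq⟩ | ⟨q, hq⟩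
  · subst hq
    rw [show q + q = 2 * q by ring]
    rw [gcoef_zero_even, show 2 * (2 * q) = 2 * (2 * q) from rfl]
    rw [gaussMoment_even (2 * q), gaussMoment_even q]
    rw [Nat.cast_choose ℝ (by omega : q ≤ 2 * q), Nat.cast_choose ℝ (by omega : 2 * q ≤ 2 * (2 * q))]
    have h1 : 2 * q - q = q := by omega
    have h2 : 2 * (2 * q) - 2 * q = 2 * q := by omega
    rw [h1, h2]
    have f1 : (0:ℝ) < (q.factorial : ℝ) := by exact_mod_cast q.factorial_pos
    have f2 : (0:ℝ) < ((2*q).factorial : ℝ) := by exact_mod_cast (2*q).factorial_pos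
    have f3 : (0:ℝ) < ((2*(2*q)).factorial : ℝ) := by exact_mod_cast (2*(2*q)).factorial_pos
    have p1 : (0:ℝ) < (2:ℝ) ^ q := by positivity
    have p2 : (0:ℝ) < (2:ℝ) ^ (2*q) := by positivity
    field_simp
    ring_nf
  · subst hq
    rw [gcoef_zero_odd, gaussMoment_odd, mul_zero]
    norm_num



lemma integral_pow_gauss_centered_even (v : ℝ≥0) (p : ℕ) :
    ∫ x, x ^ (2*p) ∂(gaussianReal 0 v) = (v:ℝ) ^ p * gaussMoment (2*p) := by
  rw [integral_pow_gauss_centered]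
  congr 1
  rw [pow_mul]
  congr 1
  rw [sq]
  exact Real.mul_self_sqrt v.2

lemma abs_pow_mul_pow_le (x y : ℝ) (k l p : ℕ) (hkl : k + l = 2 * p) :
    |x ^ k * y ^ l| ≤ x ^ (2 * p) + y ^ (2 * p) := by
  have hx2 : (0:ℝ) ≤ x ^ (2 * p) := by rw [pow_mul]; positivity
  have hy2 : (0:ℝ) ≤ y ^ (2 * p) := by rw [pow_mul]; positivity
  rcases le_total |x| |y| with hxy | hxy
  · calc |x ^ k * y ^ l| = |x| ^ k * |y| ^ l := by rw [abs_mul, abs_pow, abs_pow]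
      _ ≤ |y| ^ k * |y| ^ l := by
          apply mul_le_mul_of_nonneg_right (pow_le_pow_left₀ (abs_nonneg x) hxy k) (by positivity)
      _ = |y ^ (2*p)| := by rw [← pow_add, hkl, abs_pow]
      _ = y ^ (2*p) := abs_of_nonneg hy2
      _ ≤ x ^ (2*p) + y ^ (2*p) := le_add_of_nonneg_left hx2
  · calc |x ^ k * y ^ l| = |x| ^ k * |y| ^ l := by rw [abs_mul, abs_pow, abs_pow]
      _ ≤ |x| ^ k * |x| ^ l := by
          apply mul_le_mul_of_nonneg_left (pow_le_pow_left₀ (abs_nonneg y) hxy l) (by positivity)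
      _ = |x ^ (2*p)| := by rw [← pow_add, hkl, abs_pow]
      _ = x ^ (2*p) := abs_of_nonneg hx2
      _ ≤ x ^ (2*p) + y ^ (2*p) := le_add_of_nonneg_right hy2

lemma bivar {Ω : Type*} [MeasurableSpace Ω] (P : Measure Ω) [IsProbabilityMeasure P]
    (U V : Ω → ℝ) (hU : Measurable U) (hV : Measurable V) (s ρ : ℝ) (p : ℕ)
    (h : ∀ a b : ℝ, ∃ v : ℝ≥0, (v : ℝ) = s * (a^2 + 2*ρ*a*b + b^2) ∧
      P.map (fun ω => a * U ω + b * V ω) = gaussianReal 0 v) :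
    ∫ ω, U ω ^ p * V ω ^ p ∂P
      = gaussMoment (2*p) * s ^ p * gcoef p ρ / ((2*p).choose p) := by
  have hUlaw : ∃ v : ℝ≥0, P.map U = gaussianReal 0 v := by
    obtain ⟨v, _, hmap⟩ := h 1 0
    refine ⟨v, ?_⟩
    rw [← hmap]; congr 1; funext ω; ring
  have hVlaw : ∃ v : ℝ≥0, P.map V = gaussianReal 0 v := by
    obtain ⟨v, _, hmap⟩ := h 0 1
    refine ⟨v, ?_⟩
    rw [← hmap]; congr 1; funext ω; ring
  have hUint : Integrable (fun ω => U ω ^ (2*p)) P := by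
    obtain ⟨v, hmap⟩ := hUlaw
    have h2 : Integrable (fun x : ℝ => x ^ (2*p)) (P.map U) := by
      rw [hmap]; exact integrable_pow_gauss 0 v _
    have h3 := (integrable_map_measure (by fun_prop) hU.aemeasurable).mp h2
    exact h3
  have hVint : Integrable (fun ω => V ω ^ (2*p)) P := by
    obtain ⟨v, hmap⟩ := hVlaw
    have h2 : Integrable (fun x : ℝ => x ^ (2*p)) (P.map V) := by
      rw [hmap]; exact integrable_pow_gauss 0 v _
    have h3 := (integrable_map_measure (by fun_prop) hV.aemeasurable).mp h2
    exact h3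
  have hint : ∀ k l : ℕ, k + l = 2*p → Integrable (fun ω => U ω ^ k * V ω ^ l) P := by
    intro k l hkl
    apply (hUint.add hVint).mono'
      (((hU.pow_const k).mul (hV.pow_const l)).aestronglyMeasurable)
    filter_upwards with ω
    rw [Real.norm_eq_abs]
    exact abs_pow_mul_pow_le _ _ _ _ _ hkl
  have key : ∀ a b : ℝ, ∫ ω, (a * U ω + b * V ω) ^ (2*p) ∂P
      = gaussMoment (2*p) * s ^ p * (a^2 + 2*ρ*a*b + b^2) ^ p := by
    intro a b
    obtain ⟨v, hv, hmap⟩ := h a b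
    have h1 : ∫ ω, (a * U ω + b * V ω) ^ (2*p) ∂P
        = ∫ x, x ^ (2*p) ∂(gaussianReal 0 v) := by
      rw [← hmap, integral_map (by fun_prop) (by fun_prop)]
    rw [h1, integral_pow_gauss_centered_even, hv, mul_pow]
    ring
  set M : ℕ → ℝ := fun k => ∫ ω, U ω ^ k * V ω ^ (2*p - k) ∂P with hM
  have binom : ∀ a b : ℝ, ∫ ω, (a * U ω + b * V ω) ^ (2*p) ∂P
      = ∑ k ∈ Finset.range (2*p+1), (((2*p).choose k : ℝ) * M k) * (a ^ k * b ^ (2*p - k)) := by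
    intro a b
    have hexp : (fun ω => (a * U ω + b * V ω) ^ (2*p))
        = fun ω => ∑ k ∈ Finset.range (2*p+1),
            (a ^ k * b ^ (2*p-k) * ((2*p).choose k : ℝ)) * (U ω ^ k * V ω ^ (2*p-k)) := by
      funext ω
      rw [add_pow]
      congr 1; funext k
      rw [mul_pow, mul_pow]
      ring
    rw [hexp, integral_finset_sum]
    · congr 1; funext k
      rw [integral_const_mul]
      ring
    · intro k hk
      exact ((hint k (2*p-k) (by simp only [Finset.mem_range] at hk; omega)).const_mul _)
  set Q1 : Polynomial ℝ := ∑ k ∈ Finset.range (2*p+1),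
      C (((2*p).choose k : ℝ) * M k) * Polynomial.X ^ k with hQ1
  set Q2 : Polynomial ℝ := C (gaussMoment (2*p) * s ^ p) *
      (Polynomial.X ^ 2 + C (2*ρ) * Polynomial.X + 1) ^ p with hQ2
  have hQeq : Q1 = Q2 := by
    apply Polynomial.funext
    intro a
    have e1 : Q1.eval a = ∑ k ∈ Finset.range (2*p+1),
        (((2*p).choose k : ℝ) * M k) * (a ^ k * (1:ℝ) ^ (2*p - k)) := by
      rw [hQ1, Polynomial.eval_finset_sum]
      congr 1; funext k
      simp
    have e2 : Q2.eval a = gaussMoment (2*p) * s ^ p * (a^2 + 2*ρ*a*1 + 1^2) ^ p := by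
      rw [hQ2]
      simp only [Polynomial.eval_mul, Polynomial.eval_C, Polynomial.eval_pow,
        Polynomial.eval_add, Polynomial.eval_one, Polynomial.eval_X]
      norm_num
    rw [e1, e2, ← binom a 1, key a 1]
  have hcoeff := congrArg (fun q : Polynomial ℝ => q.coeff p) hQeq
  simp only [hQ1, hQ2] at hcoeff
  rw [Polynomial.finset_sum_coeff] at hcoeff
  simp only [Polynomial.coeff_C_mul, Polynomial.coeff_X_pow] at hcoeff
  rw [Finset.sum_eq_single p] at hcoeff
  · simp only [if_true, mul_one] at hcoeff
    have hMp : M p = ∫ ω, U ω ^ p * V ω ^ p ∂P := by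
      have h7 : 2 * p - p = p := by omega
      simp only [hM, h7]
    have hchoose : (((2*p).choose p : ℕ) : ℝ) ≠ 0 := by
      exact_mod_cast (Nat.choose_pos (by omega : p ≤ 2*p)).ne'
    rw [← hMp, eq_div_iff hchoose, mul_comm, hcoeff]
    simp only [gcoef]
  · intro k _ hkp
    simp [Ne.symm hkp]
  · intro hp
    exfalso
    apply hp
    simp only [Finset.mem_range]
    omega

end FbmAux

set_option maxHeartbeats 3000000 in
/-- For a fBm with Hurst index `H ∈ (0,1)` such that `p = 1/H` is a positive
integer, with `t_i = i/N`: there is `C > 0` such that for every `N ≥ 1` and all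
`i ≠ j`,
`|E[((B_{t_{i+1}}-B_{t_i})^p - E[Z^p]/N)((B_{t_{j+1}}-B_{t_j})^p - E[Z^p]/N)]|
  ≤ C N^{-2} |ρ_H(i-j)|`. -/
theorem stmt_13 {Ω : Type*} [MeasurableSpace Ω] (P : Measure Ω) [IsProbabilityMeasure P]
    (H : ℝ) (hH : H ∈ Set.Ioo (0:ℝ) 1) (B : ℝ → Ω → ℝ) (hB : IsFBM P H B)
    (p : ℕ) (hp : 1 ≤ p) (hpH : (p : ℝ) * H = 1) :
    ∃ C > 0, ∀ N : ℕ, 1 ≤ N → ∀ i j : ℕ, i ≠ j →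
      |∫ ω, ((B (((i:ℝ)+1)/N) ω - B ((i:ℝ)/N) ω) ^ p - gaussMoment p / N) *
          ((B (((j:ℝ)+1)/N) ω - B ((j:ℝ)/N) ω) ^ p - gaussMoment p / N) ∂P|
        ≤ C / (N:ℝ)^2 * |rhoH H ((i:ℤ) - (j:ℤ))| := by
  classical
  obtain ⟨hH0, hH1⟩ := hH
  set K : ℝ := gaussMoment (2*p) / ((2*p).choose p) with hK
  set G0 : Polynomial ℝ := FbmAux.Gpoly p with hG0
  set Bd : ℝ := FbmAux.polyBound ((G0 - Polynomial.C (G0.eval 0)).divX) with hBd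
  have hBd0 : 0 ≤ Bd := Finset.sum_nonneg (fun _ _ => abs_nonneg _)
  have hCpos : 0 < |K| * Bd + 1 := by nlinarith [abs_nonneg K]
  refine ⟨|K| * Bd + 1, hCpos, ?_⟩
  intro N hN i j hij
  have hNpos : (0:ℝ) < N := by exact_mod_cast hN
  have hmB : ∀ t : ℝ, Measurable (B t) := hB.gaussian.1
  -- laws of single values and integrability
  have hlawB : ∀ t : ℝ, ∃ m : ℝ, ∃ v : NNReal, P.map (B t) = gaussianReal m v := by
    intro t
    obtain ⟨m, v, hmap⟩ := hB.gaussian.2 1 ![t] ![1]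
    refine ⟨m, v, ?_⟩
    rw [← hmap]; congr 1; funext ω; simp
  have hintBpow : ∀ (t : ℝ) (n : ℕ), Integrable (fun ω => B t ω ^ n) P := by
    intro t n
    obtain ⟨m, v, hmap⟩ := hlawB t
    have h2 : Integrable (fun x : ℝ => x ^ n) (P.map (B t)) := by
      rw [hmap]; exact FbmAux.integrable_pow_gauss m v n
    have h3 := (integrable_map_measure (by fun_prop) (hmB t).aemeasurable).mp h2
    exact h3
  have hintB : ∀ t : ℝ, Integrable (B t) P := by
    intro t; have := hintBpow t 1; simpa using this
  have hintBmul : ∀ t r : ℝ, Integrable (fun ω => B t ω * B r ω) P := by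
    intro t r
    apply ((hintBpow t 2).add (hintBpow r 2)).mono'
      (((hmB t).mul (hmB r)).aestronglyMeasurable)
    filter_upwards with ω
    simp only [Pi.add_apply, Pi.mul_apply]
    rw [Real.norm_eq_abs]
    nlinarith [abs_nonneg (B t ω * B r ω), sq_nonneg (|B t ω| - |B r ω|),
      abs_mul (B t ω) (B r ω), abs_nonneg (B t ω), abs_nonneg (B r ω),
      sq_abs (B t ω), sq_abs (B r ω)]
  -- basic quantities
  set u : ℝ := 1 / (N:ℝ) with hu
  have hupos : (0:ℝ) < u := by rw [hu]; positivity
  set s : ℝ := u ^ (2*H) with hs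
  have hspos : (0:ℝ) < s := Real.rpow_pos_of_pos hupos _
  have hnn : ∀ k : ℕ, (0:ℝ) ≤ (k:ℝ)/(N:ℝ) := fun k => div_nonneg (Nat.cast_nonneg k) hNpos.le
  have hnn1 : ∀ k : ℕ, (0:ℝ) ≤ ((k:ℝ)+1)/(N:ℝ) := fun k => div_nonneg (by positivity) hNpos.le
  -- covariance of increments
  have habs : ∀ x : ℝ, |x / (N:ℝ)| ^ (2*H) = s * |x| ^ (2*H) := by
    intro x
    rw [abs_div, abs_of_pos hNpos, div_eq_mul_inv, mul_comm |x| _, Real.mul_rpow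
      (by positivity) (abs_nonneg x), hs, hu]
    rw [one_div]
  have hcov : ∀ k l : ℕ, (∫ ω, (B (((k:ℝ)+1)/(N:ℝ)) ω - B ((k:ℝ)/(N:ℝ)) ω) *
      (B (((l:ℝ)+1)/(N:ℝ)) ω - B ((l:ℝ)/(N:ℝ)) ω) ∂P) = s * rhoH H ((k:ℤ) - (l:ℤ)) := by
    intro k l
    have e1 : (fun ω => (B (((k:ℝ)+1)/(N:ℝ)) ω - B ((k:ℝ)/(N:ℝ)) ω) *
        (B (((l:ℝ)+1)/(N:ℝ)) ω - B ((l:ℝ)/(N:ℝ)) ω))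
        = fun ω => (B (((k:ℝ)+1)/(N:ℝ)) ω * B (((l:ℝ)+1)/(N:ℝ)) ω
            - B (((k:ℝ)+1)/(N:ℝ)) ω * B ((l:ℝ)/(N:ℝ)) ω)
          - (B ((k:ℝ)/(N:ℝ)) ω * B (((l:ℝ)+1)/(N:ℝ)) ω
            - B ((k:ℝ)/(N:ℝ)) ω * B ((l:ℝ)/(N:ℝ)) ω) := by
      funext ω; ring
    have I1 : Integrable (fun ω => B (((k:ℝ)+1)/(N:ℝ)) ω * B (((l:ℝ)+1)/(N:ℝ)) ω
        - B (((k:ℝ)+1)/(N:ℝ)) ω * B ((l:ℝ)/(N:ℝ)) ω) P := (hintBmul _ _).sub (hintBmul _ _)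
    have I2 : Integrable (fun ω => B ((k:ℝ)/(N:ℝ)) ω * B (((l:ℝ)+1)/(N:ℝ)) ω
        - B ((k:ℝ)/(N:ℝ)) ω * B ((l:ℝ)/(N:ℝ)) ω) P := (hintBmul _ _).sub (hintBmul _ _)
    rw [e1, integral_sub I1 I2,
      integral_sub (hintBmul _ _) (hintBmul _ _), integral_sub (hintBmul _ _) (hintBmul _ _),
      hB.cov _ _ (hnn1 k) (hnn1 l), hB.cov _ _ (hnn1 k) (hnn l),
      hB.cov _ _ (hnn k) (hnn1 l), hB.cov _ _ (hnn k) (hnn l)]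
    have d1 : ((l:ℝ)+1)/(N:ℝ) - ((k:ℝ)+1)/(N:ℝ) = ((l:ℝ)-(k:ℝ))/(N:ℝ) := by ring
    have d2 : (l:ℝ)/(N:ℝ) - ((k:ℝ)+1)/(N:ℝ) = ((l:ℝ)-(k:ℝ)-1)/(N:ℝ) := by ring
    have d3 : ((l:ℝ)+1)/(N:ℝ) - (k:ℝ)/(N:ℝ) = ((l:ℝ)-(k:ℝ)+1)/(N:ℝ) := by ring
    have d4 : (l:ℝ)/(N:ℝ) - (k:ℝ)/(N:ℝ) = ((l:ℝ)-(k:ℝ))/(N:ℝ) := by ring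
    rw [d1, d2, d3, d4, habs, habs, habs]
    rw [rhoH]
    push_cast
    have a1 : |(k:ℝ) - (l:ℝ) + 1| = |(l:ℝ) - (k:ℝ) - 1| := by
      rw [show (k:ℝ) - (l:ℝ) + 1 = -((l:ℝ)-(k:ℝ)-1) by ring, abs_neg]
    have a2 : |(k:ℝ) - (l:ℝ) - 1| = |(l:ℝ) - (k:ℝ) + 1| := by
      rw [show (k:ℝ) - (l:ℝ) - 1 = -((l:ℝ)-(k:ℝ)+1) by ring, abs_neg]
    have a3 : |(k:ℝ) - (l:ℝ)| = |(l:ℝ) - (k:ℝ)| := abs_sub_comm _ _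
    rw [a1, a2, a3]
    ring
  have hrho0 : rhoH H ((0:ℤ)) = 1 := by
    rw [rhoH]
    have h2H : 2*H ≠ 0 := by positivity
    simp [Real.zero_rpow h2H, Real.one_rpow]
    norm_num
  -- the main estimate, for arbitrary indices
  have main : ∀ k l : ℕ, k ≠ l →
      |∫ ω, ((B (((k:ℝ)+1)/N) ω - B ((k:ℝ)/N) ω) ^ p - gaussMoment p / N) *
          ((B (((l:ℝ)+1)/N) ω - B ((l:ℝ)/N) ω) ^ p - gaussMoment p / N) ∂P|
        ≤ (|K| * Bd + 1) / (N:ℝ)^2 * |rhoH H ((k:ℤ) - (l:ℤ))| := by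
    intro k l hkl
    set U : Ω → ℝ := fun ω => B (((k:ℝ)+1)/(N:ℝ)) ω - B ((k:ℝ)/(N:ℝ)) ω with hUdef
    set V : Ω → ℝ := fun ω => B (((l:ℝ)+1)/(N:ℝ)) ω - B ((l:ℝ)/(N:ℝ)) ω with hVdef
    set ρ : ℝ := rhoH H ((k:ℤ) - (l:ℤ)) with hρ
    have hmU : Measurable U := (hmB _).sub (hmB _)
    have hmV : Measurable V := (hmB _).sub (hmB _)
    have hUU : (∫ ω, U ω * U ω ∂P) = s := by
      have := hcov k k
      simp only [sub_self, hrho0, mul_one] at this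
      rw [hUdef]
      exact this
    have hVV : (∫ ω, V ω * V ω ∂P) = s := by
      have := hcov l l
      simp only [sub_self, hrho0, mul_one] at this
      rw [hVdef]
      exact this
    have hUV : (∫ ω, U ω * V ω ∂P) = s * ρ := by
      rw [hUdef, hVdef, hρ]
      exact hcov k l
    have hintUV : Integrable (fun ω => U ω * V ω) P := by
      have e : (fun ω => U ω * V ω)
          = fun ω => (B (((k:ℝ)+1)/(N:ℝ)) ω * B (((l:ℝ)+1)/(N:ℝ)) ω
              - B (((k:ℝ)+1)/(N:ℝ)) ω * B ((l:ℝ)/(N:ℝ)) ω)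
            - (B ((k:ℝ)/(N:ℝ)) ω * B (((l:ℝ)+1)/(N:ℝ)) ω
              - B ((k:ℝ)/(N:ℝ)) ω * B ((l:ℝ)/(N:ℝ)) ω) := by
        funext ω; simp only [hUdef, hVdef]; ring
      rw [e]
      exact ((hintBmul _ _).sub (hintBmul _ _)).sub ((hintBmul _ _).sub (hintBmul _ _))
    have hintUU : Integrable (fun ω => U ω * U ω) P := by
      have e : (fun ω => U ω * U ω)
          = fun ω => (B (((k:ℝ)+1)/(N:ℝ)) ω * B (((k:ℝ)+1)/(N:ℝ)) ω
              - B (((k:ℝ)+1)/(N:ℝ)) ω * B ((k:ℝ)/(N:ℝ)) ω)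
            - (B ((k:ℝ)/(N:ℝ)) ω * B (((k:ℝ)+1)/(N:ℝ)) ω
              - B ((k:ℝ)/(N:ℝ)) ω * B ((k:ℝ)/(N:ℝ)) ω) := by
        funext ω; simp only [hUdef]; ring
      rw [e]
      exact ((hintBmul _ _).sub (hintBmul _ _)).sub ((hintBmul _ _).sub (hintBmul _ _))
    have hintVV : Integrable (fun ω => V ω * V ω) P := by
      have e : (fun ω => V ω * V ω)
          = fun ω => (B (((l:ℝ)+1)/(N:ℝ)) ω * B (((l:ℝ)+1)/(N:ℝ)) ω
              - B (((l:ℝ)+1)/(N:ℝ)) ω * B ((l:ℝ)/(N:ℝ)) ω)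
            - (B ((l:ℝ)/(N:ℝ)) ω * B (((l:ℝ)+1)/(N:ℝ)) ω
              - B ((l:ℝ)/(N:ℝ)) ω * B ((l:ℝ)/(N:ℝ)) ω) := by
        funext ω; simp only [hVdef]; ring
      rw [e]
      exact ((hintBmul _ _).sub (hintBmul _ _)).sub ((hintBmul _ _).sub (hintBmul _ _))
    -- |ρ| ≤ 1
    have hWsq : ∀ c : ℝ, (∫ ω, (U ω + c * V ω)^2 ∂P) = s + 2*c*(s*ρ) + c^2 * s := by
      intro c
      have e : (fun ω => (U ω + c * V ω)^2)
          = fun ω => (U ω * U ω + (2*c) * (U ω * V ω)) + c^2 * (V ω * V ω) := by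
        funext ω; ring
      have J1 : Integrable (fun ω => U ω * U ω + (2*c) * (U ω * V ω)) P :=
        hintUU.add (hintUV.const_mul _)
      have J2 : Integrable (fun ω => c^2 * (V ω * V ω)) P := hintVV.const_mul _
      rw [e, integral_add J1 J2,
        integral_add hintUU (hintUV.const_mul _), integral_const_mul, integral_const_mul,
        hUU, hUV, hVV]
    have hρ1 : |ρ| ≤ 1 := by
      have h1 : (0:ℝ) ≤ s + 2*1*(s*ρ) + 1^2 * s := by
        rw [← hWsq 1]
        exact integral_nonneg (fun ω => sq_nonneg _)
      have h2 : (0:ℝ) ≤ s + 2*(-1)*(s*ρ) + (-1)^2 * s := by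
        rw [← hWsq (-1)]
        exact integral_nonneg (fun ω => sq_nonneg _)
      rw [abs_le]
      constructor <;> nlinarith [hspos]
    -- gaussian law of combinations
    have hmap : ∀ a b : ℝ, ∃ v : NNReal, (v : ℝ) = s * (a^2 + 2*ρ*a*b + b^2) ∧
        P.map (fun ω => a * U ω + b * V ω) = gaussianReal 0 v := by
      intro a b
      obtain ⟨m, v, hm⟩ := hB.gaussian.2 4
        ![((k:ℝ)+1)/(N:ℝ), (k:ℝ)/(N:ℝ), ((l:ℝ)+1)/(N:ℝ), (l:ℝ)/(N:ℝ)] ![a, -a, b, -b]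
      have hm' : P.map (fun ω => a * U ω + b * V ω) = gaussianReal m v := by
        rw [← hm]
        congr 1
        funext ω
        simp only [Fin.sum_univ_four, Matrix.cons_val_zero, Matrix.cons_val_one,
          Matrix.head_cons, Matrix.cons_val_two, Matrix.tail_cons, Matrix.cons_val_three,
          hUdef, hVdef]
        ring
      have hWint : Integrable (fun ω => a * U ω + b * V ω) P := by
        have e : (fun ω => a * U ω + b * V ω)
            = fun ω => (a * B (((k:ℝ)+1)/(N:ℝ)) ω + (-a) * B ((k:ℝ)/(N:ℝ)) ω)
              + (b * B (((l:ℝ)+1)/(N:ℝ)) ω + (-b) * B ((l:ℝ)/(N:ℝ)) ω) := by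
          funext ω; simp only [hUdef, hVdef]; ring
        rw [e]
        exact (((hintB _).const_mul _).add ((hintB _).const_mul _)).add
          (((hintB _).const_mul _).add ((hintB _).const_mul _))
      have hmean : (∫ ω, (a * U ω + b * V ω) ∂P) = 0 := by
        have e : (fun ω => a * U ω + b * V ω)
            = fun ω => (a * B (((k:ℝ)+1)/(N:ℝ)) ω + (-a) * B ((k:ℝ)/(N:ℝ)) ω)
              + (b * B (((l:ℝ)+1)/(N:ℝ)) ω + (-b) * B ((l:ℝ)/(N:ℝ)) ω) := by
          funext ω; simp only [hUdef, hVdef]; ring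
        have J1 : Integrable (fun ω => a * B (((k:ℝ)+1)/(N:ℝ)) ω + (-a) * B ((k:ℝ)/(N:ℝ)) ω) P :=
          ((hintB _).const_mul _).add ((hintB _).const_mul _)
        have J2 : Integrable (fun ω => b * B (((l:ℝ)+1)/(N:ℝ)) ω + (-b) * B ((l:ℝ)/(N:ℝ)) ω) P :=
          ((hintB _).const_mul _).add ((hintB _).const_mul _)
        rw [e, integral_add J1 J2,
          integral_add ((hintB _).const_mul _) ((hintB _).const_mul _),
          integral_add ((hintB _).const_mul _) ((hintB _).const_mul _),
          integral_const_mul, integral_const_mul, integral_const_mul, integral_const_mul,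
          hB.centered _ (hnn1 k), hB.centered _ (hnn k),
          hB.centered _ (hnn1 l), hB.centered _ (hnn l)]
        ring
      have hm0 : m = 0 := by
        have h1 : ∫ x, x ∂(gaussianReal m v) = m := FbmAux.integral_id_gauss m v
        rw [← hm', integral_map (by fun_prop) measurable_id'.aestronglyMeasurable] at h1
        rw [← h1, hmean]
      rw [hm0] at hm'
      refine ⟨v, ?_, hm'⟩
      have h2 : ∫ x, x^2 ∂(gaussianReal 0 v) = v := FbmAux.integral_sq_gauss_centered v
      rw [← hm', integral_map (by fun_prop) (by fun_prop)] at h2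
      have e2 : (∫ ω, (a * U ω + b * V ω)^2 ∂P) = s * (a^2 + 2*ρ*a*b + b^2) := by
        have e : (fun ω => (a * U ω + b * V ω)^2)
            = fun ω => (a^2 * (U ω * U ω) + (2*a*b) * (U ω * V ω)) + b^2 * (V ω * V ω) := by
          funext ω; ring
        have J1 : Integrable (fun ω => a^2 * (U ω * U ω) + (2*a*b) * (U ω * V ω)) P :=
          (hintUU.const_mul _).add (hintUV.const_mul _)
        have J2 : Integrable (fun ω => b^2 * (V ω * V ω)) P := hintVV.const_mul _
        rw [e, integral_add J1 J2, integral_add (hintUU.const_mul _) (hintUV.const_mul _),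
          integral_const_mul, integral_const_mul, integral_const_mul, hUU, hUV, hVV]
        ring
      rw [← h2, e2]
    -- apply the bivariate moment formula
    have hMp := FbmAux.bivar P U V hmU hmV s ρ p hmap
    -- law of U alone
    have hUlaw : ∃ v : NNReal, (v:ℝ) = s ∧ P.map U = gaussianReal 0 v := by
      obtain ⟨v, hv, hm⟩ := hmap 1 0
      refine ⟨v, by rw [hv]; ring, ?_⟩
      rw [← hm]; congr 1; funext ω; ring
    have hVlaw : ∃ v : NNReal, (v:ℝ) = s ∧ P.map V = gaussianReal 0 v := by
      obtain ⟨v, hv, hm⟩ := hmap 0 1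
      refine ⟨v, by rw [hv]; ring, ?_⟩
      rw [← hm]; congr 1; funext ω; ring
    -- (√s)^p = u and s^p = u^2
    have hsqrt : Real.sqrt s = u ^ H := by
      rw [hs, show (2*H) = H*2 by ring, Real.rpow_mul hupos.le]
      rw [show ((u ^ H : ℝ) ^ (2:ℝ)) = (u ^ H)^(2:ℕ) by
        rw [← Real.rpow_natCast (u ^ H) 2]; norm_num]
      exact Real.sqrt_sq (Real.rpow_nonneg hupos.le H)
    have hup : (u ^ H) ^ p = u := by
      rw [← Real.rpow_natCast (u ^ H) p, ← Real.rpow_mul hupos.le]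
      rw [show H * (p:ℝ) = 1 by rw [mul_comm]; exact hpH]
      exact Real.rpow_one u
    have hsp : s ^ p = u^2 := by
      rw [hs, ← Real.rpow_natCast (u ^ (2*H)) p, ← Real.rpow_mul hupos.le]
      rw [show (2*H) * (p:ℝ) = 2 by rw [mul_assoc, mul_comm H _, hpH]; norm_num]
      rw [← Real.rpow_natCast u 2]; norm_num
    -- E[U^p] = gaussMoment p * u
    have hEUp : (∫ ω, U ω ^ p ∂P) = gaussMoment p * u := by
      obtain ⟨v, hv, hm⟩ := hUlaw
      have h1 : (∫ ω, U ω ^ p ∂P) = ∫ x, x ^ p ∂(gaussianReal 0 v) := by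
        rw [← hm, integral_map (by fun_prop) (by fun_prop)]
      rw [h1, FbmAux.integral_pow_gauss_centered]
      have : Real.sqrt (v:ℝ) = u ^ H := by rw [hv]; exact hsqrt
      rw [this, hup]
      ring
    have hEVp : (∫ ω, V ω ^ p ∂P) = gaussMoment p * u := by
      obtain ⟨v, hv, hm⟩ := hVlaw
      have h1 : (∫ ω, V ω ^ p ∂P) = ∫ x, x ^ p ∂(gaussianReal 0 v) := by
        rw [← hm, integral_map (by fun_prop) (by fun_prop)]
      rw [h1, FbmAux.integral_pow_gauss_centered]
      have : Real.sqrt (v:ℝ) = u ^ H := by rw [hv]; exact hsqrt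
      rw [this, hup]
      ring
    -- integrability of powers
    have hintU2p : Integrable (fun ω => U ω ^ (2*p)) P := by
      obtain ⟨v, _, hm⟩ := hUlaw
      have h2 : Integrable (fun x : ℝ => x ^ (2*p)) (P.map U) := by
        rw [hm]; exact FbmAux.integrable_pow_gauss 0 v _
      have h3 := (integrable_map_measure (by fun_prop) hmU.aemeasurable).mp h2
      exact h3
    have hintV2p : Integrable (fun ω => V ω ^ (2*p)) P := by
      obtain ⟨v, _, hm⟩ := hVlaw
      have h2 : Integrable (fun x : ℝ => x ^ (2*p)) (P.map V) := by
        rw [hm]; exact FbmAux.integrable_pow_gauss 0 v _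
      have h3 := (integrable_map_measure (by fun_prop) hmV.aemeasurable).mp h2
      exact h3
    have hintUp : Integrable (fun ω => U ω ^ p) P := by
      obtain ⟨v, _, hm⟩ := hUlaw
      have h2 : Integrable (fun x : ℝ => x ^ p) (P.map U) := by
        rw [hm]; exact FbmAux.integrable_pow_gauss 0 v _
      have h3 := (integrable_map_measure (by fun_prop) hmU.aemeasurable).mp h2
      exact h3
    have hintVp : Integrable (fun ω => V ω ^ p) P := by
      obtain ⟨v, _, hm⟩ := hVlaw
      have h2 : Integrable (fun x : ℝ => x ^ p) (P.map V) := by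
        rw [hm]; exact FbmAux.integrable_pow_gauss 0 v _
      have h3 := (integrable_map_measure (by fun_prop) hmV.aemeasurable).mp h2
      exact h3
    have hintUVp : Integrable (fun ω => U ω ^ p * V ω ^ p) P := by
      apply (hintU2p.add hintV2p).mono'
        (((hmU.pow_const p).mul (hmV.pow_const p)).aestronglyMeasurable)
      filter_upwards with ω
      rw [Real.norm_eq_abs]
      exact FbmAux.abs_pow_mul_pow_le _ _ _ _ _ (by ring)
    -- expand the integrand
    set c : ℝ := gaussMoment p / N with hc
    have hcu : c = gaussMoment p * u := by rw [hc, hu]; ring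
    have hexp : (∫ ω, (U ω ^ p - c) * (V ω ^ p - c) ∂P)
        = (∫ ω, U ω ^ p * V ω ^ p ∂P) - c * (gaussMoment p * u)
          - c * (gaussMoment p * u) + c * c := by
      have e : (fun ω => (U ω ^ p - c) * (V ω ^ p - c))
          = fun ω => ((U ω ^ p * V ω ^ p - c * U ω ^ p) - c * V ω ^ p) + c * c := by
        funext ω; ring
      have J1 : Integrable (fun ω => (U ω ^ p * V ω ^ p - c * U ω ^ p) - c * V ω ^ p) P :=
        (hintUVp.sub (hintUp.const_mul c)).sub (hintVp.const_mul c)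
      have J2 : Integrable (fun ω => U ω ^ p * V ω ^ p - c * U ω ^ p) P :=
        hintUVp.sub (hintUp.const_mul c)
      rw [e, integral_add J1 (integrable_const (c * c)), integral_sub J2
        (hintVp.const_mul c), integral_sub hintUVp (hintUp.const_mul c),
        integral_const_mul, integral_const_mul, integral_const, hEUp, hEVp]
      simp [measure_univ]
    -- key identity
    have hchoose : (((2*p).choose p : ℕ) : ℝ) ≠ 0 := by
      exact_mod_cast (Nat.choose_pos (by omega : p ≤ 2*p)).ne'
    have hgmsq : gaussMoment p ^ 2 = K * FbmAux.gcoef p 0 := by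
      have := FbmAux.key_identity p
      rw [hK]
      field_simp
      linarith [this]
    have hfinal : (∫ ω, (U ω ^ p - c) * (V ω ^ p - c) ∂P)
        = u^2 * (K * (FbmAux.gcoef p ρ - FbmAux.gcoef p 0)) := by
      rw [hexp, hMp, hcu, hsp]
      rw [show gaussMoment (2*p) * (u^2) * FbmAux.gcoef p ρ / ((2*p).choose p)
          = u^2 * (K * FbmAux.gcoef p ρ) by rw [hK]; ring]
      have : gaussMoment p * u * (gaussMoment p * u) = u^2 * (gaussMoment p ^2) := by ring
      rw [this, hgmsq]
      ring
    -- final bound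
    have hbound : |FbmAux.gcoef p ρ - FbmAux.gcoef p 0| ≤ Bd * |ρ| := by
      rw [FbmAux.gcoef_eq_eval, FbmAux.gcoef_eq_eval, ← hG0, hBd]
      exact FbmAux.abs_eval_sub_eval_zero_le G0 hρ1
    have hu2 : u^2 = 1/(N:ℝ)^2 := by rw [hu]; ring
    calc |∫ ω, (U ω ^ p - c) * (V ω ^ p - c) ∂P|
        = u^2 * (|K| * |FbmAux.gcoef p ρ - FbmAux.gcoef p 0|) := by
          rw [hfinal, abs_mul, abs_mul, abs_of_pos (by positivity : (0:ℝ) < u^2)]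
      _ ≤ u^2 * (|K| * (Bd * |ρ|)) := by
          apply mul_le_mul_of_nonneg_left _ (by positivity)
          exact mul_le_mul_of_nonneg_left hbound (abs_nonneg K)
      _ ≤ (|K| * Bd + 1) / (N:ℝ)^2 * |ρ| := by
          rw [hu2]
          have h9 : |K| * (Bd * |ρ|) ≤ (|K| * Bd + 1) * |ρ| := by
            nlinarith [abs_nonneg ρ, abs_nonneg K, hBd0]
          calc 1/(N:ℝ)^2 * (|K| * (Bd * |ρ|)) ≤ 1/(N:ℝ)^2 * ((|K| * Bd + 1) * |ρ|) := by
                apply mul_le_mul_of_nonneg_left h9 (by positivity)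
            _ = (|K| * Bd + 1) / (N:ℝ)^2 * |ρ| := by ring
  exact main i j hij


end
end

section
/- Let α ∈ (1, 2] and let G_α(t, ·) be the fractional heat kernel on ℝ, i.e. the function whose Fourier transform in the space variable is ξ ↦ e^{−t|ξ|^α} (for t > 0), with G_α(t, ·) = 0 for t ≤ 0. Then for every T > 0 there exists a constant C_T > 0 such that for all 0 ≤ s ≤ t ≤ T and all δ > 0: ∫₀^s ∫_ℝ ( G_α(t+δ−a, x−y) − G_α(t−a, x−y) )² dy da ≤ C_T δ² (t−s)^{−(α+1)/α}. Equivalently, by Parseval's identity, ∫₀^s ∫_ℝ | e^{−(t+δ−a)|ξ|^α} − e^{−(t−a)|ξ|^α} |² dξ da ≤ C_T δ² (t−s)^{−(α+1)/α}. -/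
open MeasureTheory Filter

noncomputable section

section Stmt14Aux

open Set Real


lemma my_integrable_comp_abs {f : ℝ → ℝ} (hf : IntegrableOn f (Ioi (0:ℝ))) :
    Integrable (fun x => f |x|) := by
  have int_Ioi : IntegrableOn (fun x => f |x|) (Ioi (0:ℝ)) :=
    hf.congr_fun (fun x hx => by rw [abs_of_pos hx]) measurableSet_Ioi
  have int_Iic : IntegrableOn (fun x => f |x|) (Iic (0:ℝ)) := by
    have m : MeasurableEmbedding (Neg.neg : ℝ → ℝ) := (Homeomorph.neg ℝ).measurableEmbedding
    have key : IntegrableOn (fun x => f |x|) (Iic (0:ℝ)) (Measure.map Neg.neg volume) := by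
      rw [MeasurableEmbedding.integrableOn_map_iff m]
      simp_rw [Function.comp_def, abs_neg, neg_preimage, neg_Iic, neg_zero]
      exact Iff.mpr integrableOn_Ici_iff_integrableOn_Ioi int_Ioi
    rwa [Measure.map_neg_eq_self] at key
  rw [← integrableOn_univ, ← Iic_union_Ioi (a := (0:ℝ))]
  exact int_Iic.union int_Ioi

lemma my_h_integrable {α : ℝ} (hα : 1 < α) :
    Integrable (fun x : ℝ => (|x| ^ α)^2 * Real.exp (-(|x| ^ α))) := by
  have hf : IntegrableOn (fun x : ℝ => (x ^ α)^2 * Real.exp (-(x ^ α))) (Ioi 0) := by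
    have := integrableOn_rpow_mul_exp_neg_rpow (p := α) (s := 2*α) (by linarith) (by linarith)
    refine this.congr_fun (fun x hx => ?_) measurableSet_Ioi
    dsimp only
    rw [show (2*α) = α * 2 by ring, Real.rpow_mul (le_of_lt hx)]
    norm_num [Real.rpow_two]
  exact my_integrable_comp_abs hf

lemma my_inner_bound {α : ℝ} (hα : 1 < α) {l δ : ℝ} (hl : 0 < l) (hδ : 0 < δ) :
    ∫ ξ : ℝ, (Real.exp (-(l + δ) * |ξ| ^ α) - Real.exp (-l * |ξ| ^ α))^2
      ≤ δ^2 * (∫ x : ℝ, (|x| ^ α)^2 * Real.exp (-(|x| ^ α))) * l ^ (-(2 + 1/α)) := by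
  have hα0 : (0:ℝ) < α := by linarith
  set h : ℝ → ℝ := fun x => (|x| ^ α)^2 * Real.exp (-(|x| ^ α)) with hh
  have hK : Integrable h := my_h_integrable hα
  have hKnn : 0 ≤ ∫ x : ℝ, h x := integral_nonneg fun x => by positivity
  have h2l : (0:ℝ) < 2*l := by linarith
  set c : ℝ := (2*l) ^ (α⁻¹ : ℝ) with hcdef
  have hc : 0 < c := Real.rpow_pos_of_pos h2l _
  have hcα : c ^ α = 2*l := Real.rpow_inv_rpow h2l.le hα0.ne'
  have keyid : ∀ ξ : ℝ, h (c * ξ) = (2*l)^2 * ((|ξ| ^ α)^2 * Real.exp (-(2*l) * |ξ| ^ α)) := by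
    intro ξ
    have habs : |c * ξ| ^ α = (2*l) * |ξ| ^ α := by
      rw [abs_mul, abs_of_pos hc, Real.mul_rpow hc.le (abs_nonneg ξ), hcα]
    simp only [hh, habs]
    ring_nf
  have hmInt : Integrable (fun ξ : ℝ => δ^2 * (((2*l)^2)⁻¹ * h (c * ξ))) :=
    ((hK.comp_mul_left' hc.ne').const_mul _).const_mul _
  have hmono : ∫ ξ : ℝ, (Real.exp (-(l + δ) * |ξ| ^ α) - Real.exp (-l * |ξ| ^ α))^2
      ≤ ∫ ξ : ℝ, δ^2 * (((2*l)^2)⁻¹ * h (c * ξ)) := by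
    refine integral_mono_of_nonneg (Filter.Eventually.of_forall fun ξ => sq_nonneg _) hmInt
      (Filter.Eventually.of_forall fun ξ => ?_)
    have hrw : ((2*l)^2)⁻¹ * h (c * ξ) = (|ξ| ^ α)^2 * Real.exp (-(2*l) * |ξ| ^ α) := by
      rw [keyid ξ, inv_mul_cancel_left₀ (by positivity)]
    dsimp only
    rw [hrw]
    set r : ℝ := |ξ| ^ α with hr
    have hr0 : 0 ≤ r := Real.rpow_nonneg (abs_nonneg ξ) α
    have e1 : Real.exp (-(l + δ) * r) = Real.exp (-l * r) * Real.exp (-(δ * r)) := by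
      rw [← Real.exp_add]; ring_nf
    have e2 : Real.exp (-(2*l) * r) = Real.exp (-l * r) * Real.exp (-l * r) := by
      rw [← Real.exp_add]; ring_nf
    have h1 : 0 ≤ 1 - Real.exp (-(δ * r)) := by
      have : Real.exp (-(δ * r)) ≤ Real.exp 0 := Real.exp_le_exp.mpr (by nlinarith)
      rw [Real.exp_zero] at this; linarith
    have h2 : 1 - Real.exp (-(δ * r)) ≤ δ * r := by
      have := Real.add_one_le_exp (-(δ * r)); linarith
    have key : (Real.exp (-(l + δ) * r) - Real.exp (-l * r))^2
        = Real.exp (-(2*l) * r) * (1 - Real.exp (-(δ * r)))^2 := by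
      rw [e1, e2]; ring
    calc (Real.exp (-(l + δ) * r) - Real.exp (-l * r))^2
        = Real.exp (-(2*l) * r) * (1 - Real.exp (-(δ * r)))^2 := key
      _ ≤ Real.exp (-(2*l) * r) * (δ * r)^2 := by
          exact mul_le_mul_of_nonneg_left (pow_le_pow_left₀ h1 h2 2) (Real.exp_nonneg _)
      _ = δ^2 * (r^2 * Real.exp (-(2*l) * r)) := by ring
  have hval : ∫ ξ : ℝ, δ^2 * (((2*l)^2)⁻¹ * h (c * ξ))
      = δ^2 * (((2*l)^2)⁻¹ * (c⁻¹ * ∫ x : ℝ, h x)) := by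
    rw [integral_const_mul, integral_const_mul]
    congr 2
    rw [Measure.integral_comp_mul_left h c, abs_of_pos (inv_pos.mpr hc), smul_eq_mul]
  have step : ((2*l)^2)⁻¹ * c⁻¹ ≤ l ^ (-(2 + 1/α)) := by
    have e : ((2*l)^2)⁻¹ * c⁻¹ = (2*l) ^ (-(2 + 1/α)) := by
      rw [show ((2*l):ℝ)^2 = (2*l)^((2:ℕ):ℝ) by rw [Real.rpow_natCast]]
      rw [← Real.rpow_neg h2l.le, ← Real.rpow_neg h2l.le, ← Real.rpow_add h2l]
      congr 1
      rw [one_div]; push_cast; ring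
    rw [e]
    refine Real.rpow_le_rpow_of_nonpos hl (by linarith) (neg_nonpos.mpr (by positivity))
  calc ∫ ξ : ℝ, (Real.exp (-(l + δ) * |ξ| ^ α) - Real.exp (-l * |ξ| ^ α))^2
      ≤ δ^2 * (((2*l)^2)⁻¹ * (c⁻¹ * ∫ x : ℝ, h x)) := hval ▸ hmono
    _ = δ^2 * (∫ x : ℝ, h x) * (((2*l)^2)⁻¹ * c⁻¹) := by ring
    _ ≤ δ^2 * (∫ x : ℝ, h x) * l ^ (-(2 + 1/α)) := by
        exact mul_le_mul_of_nonneg_left step (by positivity)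

lemma my_outer {β : ℝ} (hβ : 1 < β) {s t : ℝ} (hs : 0 ≤ s) (hst : s < t) :
    ∫ a in Ioc (0:ℝ) s, (t - a) ^ (-β) ≤ (t - s) ^ (-β+1) / (β - 1) := by
  have hts : 0 < t - s := by linarith
  have ht : 0 < t := by linarith
  rw [← intervalIntegral.integral_of_le hs,
    intervalIntegral.integral_comp_sub_left (fun u => u ^ (-β)) t, sub_zero,
    integral_rpow (Or.inr ⟨by intro hcon; linarith [neg_eq_iff_eq_neg.mp hcon],
      Set.notMem_uIcc_of_lt hts ht⟩)]
  have hb1 : β - 1 ≠ 0 := by linarith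
  have hb2 : -β + 1 ≠ 0 := by intro hcon; apply hb1; linarith
  have e : (t ^ (-β+1) - (t-s) ^ (-β+1)) / (-β+1)
      = ((t-s) ^ (-β+1) - t ^ (-β+1)) / (β-1) := by
    rw [div_eq_div_iff hb2 hb1]; ring
  rw [e]
  have htnn : 0 ≤ t ^ (-β+1) := Real.rpow_nonneg ht.le _
  apply div_le_div_of_nonneg_right ?_ (by linarith)
  linarith

end Stmt14Aux

section Stmt14Main

open Set Real

/-- For `α ∈ (1,2]` and `T > 0` there is `C_T > 0` such that for all
`0 ≤ s ≤ t ≤ T` and `δ > 0`,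
`∫₀^s ∫_ℝ (G_α(t+δ-a, x-y) - G_α(t-a, x-y))² dy da ≤ C_T δ² (t-s)^{-(α+1)/α}`,
stated equivalently (via Parseval's identity, since the spatial Fourier
transform of `G_α(t,·)` is `ξ ↦ e^{-t|ξ|^α}`) as
`∫₀^s ∫_ℝ |e^{-(t+δ-a)|ξ|^α} - e^{-(t-a)|ξ|^α}|² dξ da ≤ C_T δ² (t-s)^{-(α+1)/α}`.
The right-hand side is interpreted in `[0,∞]` so that it equals `∞` when
`s = t`. -/
theorem stmt_14 (α : ℝ) (hα : α ∈ Set.Ioc (1:ℝ) 2) (T : ℝ) (hT : 0 < T) :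
    ∃ C > 0, ∀ s t δ : ℝ, 0 ≤ s → s ≤ t → t ≤ T → 0 < δ →
      ENNReal.ofReal (∫ a in Set.Ioc (0:ℝ) s, ∫ ξ : ℝ,
          (Real.exp (-(t + δ - a) * |ξ| ^ α) - Real.exp (-(t - a) * |ξ| ^ α))^2)
        ≤ ENNReal.ofReal (C * δ^2) * ENNReal.ofReal (t - s) ^ (-(α + 1)/α) := by
  obtain ⟨hα1, hα2⟩ := hα
  have hα0 : (0:ℝ) < α := by linarith
  have hαinv : (0:ℝ) < 1/α := by positivity
  set K := ∫ x : ℝ, (|x| ^ α)^2 * Real.exp (-(|x| ^ α)) with hKdef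
  have hKnn : 0 ≤ K := integral_nonneg fun x => by positivity
  have hγ : (0:ℝ) < 1 + 1/α := by linarith
  have hexpeq : -(α + 1)/α = -(1 + 1/α) := by field_simp
  refine ⟨K / (1 + 1/α) + 1, by positivity, ?_⟩
  intro s t δ hs hst htT hδ
  rcases eq_or_lt_of_le hst with heq | hst'
  · subst heq
    have hexp : -(α + 1)/α < 0 := div_neg_of_neg_of_pos (by linarith) hα0
    rw [sub_self, ENNReal.ofReal_zero, ENNReal.zero_rpow_of_neg hexp,
      ENNReal.mul_top (ENNReal.ofReal_pos.mpr (by positivity)).ne']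
    exact le_top
  · have hts : 0 < t - s := by linarith
    have hβ : (1:ℝ) < 2 + 1/α := by linarith
    -- outer integral bound
    have g_cont : ContinuousOn (fun a : ℝ => δ^2 * K * (t - a) ^ (-(2 + 1/α))) (Set.Icc 0 s) := by
      refine continuousOn_const.mul ?_
      refine ContinuousOn.rpow_const (continuousOn_const.sub continuousOn_id) fun a ha => ?_
      exact Or.inl (by rcases ha with ⟨_, ha2⟩; intro hcon; nlinarith [hcon])
    have g_int : IntegrableOn (fun a : ℝ => δ^2 * K * (t - a) ^ (-(2 + 1/α))) (Set.Ioc 0 s) :=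
      (g_cont.integrableOn_Icc).mono_set Set.Ioc_subset_Icc_self
    have step1 : ∫ a in Set.Ioc (0:ℝ) s, ∫ ξ : ℝ,
          (Real.exp (-(t + δ - a) * |ξ| ^ α) - Real.exp (-(t - a) * |ξ| ^ α))^2
        ≤ ∫ a in Set.Ioc (0:ℝ) s, δ^2 * K * (t - a) ^ (-(2 + 1/α)) := by
      refine integral_mono_of_nonneg
        (Filter.Eventually.of_forall fun a => integral_nonneg fun ξ => sq_nonneg _) g_int
        ((ae_restrict_iff' measurableSet_Ioc).mpr (Filter.Eventually.of_forall fun a ha => ?_))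
      have hta : 0 < t - a := by rcases ha with ⟨_, ha2⟩; linarith
      have := my_inner_bound hα1 (l := t - a) (δ := δ) hta hδ
      calc ∫ ξ : ℝ, (Real.exp (-(t + δ - a) * |ξ| ^ α) - Real.exp (-(t - a) * |ξ| ^ α))^2
          = ∫ ξ : ℝ, (Real.exp (-((t - a) + δ) * |ξ| ^ α) - Real.exp (-(t - a) * |ξ| ^ α))^2 := by
            congr 1; funext ξ; rw [show t + δ - a = (t - a) + δ from by ring]
        _ ≤ δ^2 * K * (t - a) ^ (-(2 + 1/α)) := this
    have step2 : ∫ a in Set.Ioc (0:ℝ) s, δ^2 * K * (t - a) ^ (-(2 + 1/α))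
        ≤ δ^2 * K * ((t - s) ^ (-(2 + 1/α) + 1) / ((2 + 1/α) - 1)) := by
      rw [integral_const_mul]
      exact mul_le_mul_of_nonneg_left (my_outer hβ hs hst') (by positivity)
    have e2 : δ^2 * K * ((t - s) ^ (-(2 + 1/α) + 1) / ((2 + 1/α) - 1))
        = (K / (1 + 1/α)) * δ^2 * (t - s) ^ (-(1 + 1/α)) := by
      rw [show -(2 + 1/α) + 1 = -(1 + 1/α) from by ring, show (2 + 1/α) - 1 = 1 + 1/α from by ring]
      ring
    have step3 : (K / (1 + 1/α)) * δ^2 * (t - s) ^ (-(1 + 1/α))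
        ≤ (K / (1 + 1/α) + 1) * δ^2 * (t - s) ^ (-(1 + 1/α)) := by
      have : (0:ℝ) ≤ (t - s) ^ (-(1 + 1/α)) := Real.rpow_nonneg hts.le _
      nlinarith [sq_nonneg δ]
    have final : ∫ a in Set.Ioc (0:ℝ) s, ∫ ξ : ℝ,
          (Real.exp (-(t + δ - a) * |ξ| ^ α) - Real.exp (-(t - a) * |ξ| ^ α))^2
        ≤ (K / (1 + 1/α) + 1) * δ^2 * (t - s) ^ (-(1 + 1/α)) := by
      calc _ ≤ _ := step1
        _ ≤ _ := step2
        _ = _ := e2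
        _ ≤ _ := step3
    calc ENNReal.ofReal (∫ a in Set.Ioc (0:ℝ) s, ∫ ξ : ℝ,
          (Real.exp (-(t + δ - a) * |ξ| ^ α) - Real.exp (-(t - a) * |ξ| ^ α))^2)
        ≤ ENNReal.ofReal ((K / (1 + 1/α) + 1) * δ^2 * (t - s) ^ (-(1 + 1/α))) :=
          ENNReal.ofReal_le_ofReal final
      _ = ENNReal.ofReal ((K / (1 + 1/α) + 1) * δ^2) *
            ENNReal.ofReal ((t - s) ^ (-(1 + 1/α))) := ENNReal.ofReal_mul (by positivity)
      _ = ENNReal.ofReal ((K / (1 + 1/α) + 1) * δ^2) *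
            ENNReal.ofReal (t - s) ^ (-(α + 1)/α) := by
          rw [hexpeq, ENNReal.ofReal_rpow_of_pos hts]

end Stmt14Main

end
end
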